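/- arXiv:2202.00269 — 3 statements merged into one kernel-verified Lean document; each statement's English description precedes it below -/
import Mathlib

section
/- The number of triangulations of a convex (n+2)-gon by non-crossing diagonals equals the Catalan number C_n = (1/(n+1))·binom(2n, n). -/
/-! A combinatorial model of dissections of a convex `N`-gon.
Vertices are `Fin N` in cyclic (convex position) order.  A dissection is
recorded by its set of pairwise non-crossing diagonals; its cells are the
faces of the resulting subdivision. -/

namespace PolygonDissection

/-- The cyclic successor of a vertex of the `N`-gon. -/
def cyc {N : ℕ} (i : Fin N) : Fin N := ⟨(i.val + 1) % N, Nat.mod_lt _ i.pos⟩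

/-- `e` is a side of the convex `N`-gon: a pair of cyclically adjacent vertices. -/
def IsSide (N : ℕ) (e : Finset (Fin N)) : Prop :=
  ∃ i : Fin N, i ≠ cyc i ∧ e = {i, cyc i}

/-- `e` is a diagonal of the convex `N`-gon. -/
def IsDiag (N : ℕ) (e : Finset (Fin N)) : Prop :=
  e.card = 2 ∧ ¬ IsSide N e

/-- Two chords of the convex `N`-gon cross in the interior. -/
def Crosses (N : ℕ) (e f : Finset (Fin N)) : Prop :=
  ∃ a b c d : Fin N, a < c ∧ c < b ∧ b < d ∧
    ((e = {a, b} ∧ f = {c, d}) ∨ (e = {c, d} ∧ f = {a, b}))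

/-- A dissection of the convex `N`-gon: a set of pairwise non-crossing diagonals. -/
def IsDissection (N : ℕ) (S : Finset (Finset (Fin N))) : Prop :=
  (∀ e ∈ S, IsDiag N e) ∧ ∀ e ∈ S, ∀ f ∈ S, ¬ Crosses N e f

/-- `y` is the cyclic successor of `x` among the vertices of `c`. -/
def IsNext {N : ℕ} (c : Finset (Fin N)) (x y : Fin N) : Prop :=
  x ∈ c ∧ y ∈ c ∧ y ≠ x ∧ ∀ z ∈ c, z ≠ x → (y - x).val ≤ (z - x).val

/-- `c` (a set of polygon vertices) is a cell of the dissection `S`: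
each pair of cyclically consecutive vertices of `c` is joined by a side of the
polygon or a diagonal of `S`, and no diagonal of `S` is an interior chord of `c`. -/
def IsCell (N : ℕ) (S : Finset (Finset (Fin N))) (c : Finset (Fin N)) : Prop :=
  3 ≤ c.card ∧
  (∀ x y : Fin N, IsNext c x y → IsSide N {x, y} ∨ {x, y} ∈ S) ∧
  (∀ e ∈ S, e ⊆ c → ∃ x y, e = ({x, y} : Finset (Fin N)) ∧ (IsNext c x y ∨ IsNext c y x))

/-- The number of cells of the dissection `S`. -/
noncomputable def numCells (N : ℕ) (S : Finset (Finset (Fin N))) : ℕ :=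
  {c : Finset (Fin N) | IsCell N S c}.ncard

/-- The quiddity of the dissection `S`: its `i`-th entry is the number of
cells containing the `i`-th vertex. -/
noncomputable def quiddity (N : ℕ) (S : Finset (Finset (Fin N))) (i : Fin N) : ℕ :=
  {c : Finset (Fin N) | IsCell N S c ∧ i ∈ c}.ncard


/-! ### preliminaries -/

lemma pair_eq_pair_iff {α} [DecidableEq α] {a b c d : α} :
    ({a,b} : Finset α) = {c,d} ↔ (a=c ∧ b=d) ∨ (a=d ∧ b=c) := by
  constructor
  · intro h
    have ha : a ∈ ({c,d} : Finset α) := h ▸ (by simp)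
    have hb : b ∈ ({c,d} : Finset α) := h ▸ (by simp)
    have hc : c ∈ ({a,b} : Finset α) := h ▸ (by simp)
    have hd : d ∈ ({a,b} : Finset α) := h ▸ (by simp)
    simp at ha hb hc hd
    tauto
  · rintro (⟨rfl, rfl⟩|⟨rfl, rfl⟩)
    · rfl
    · exact Finset.pair_comm _ _

variable {N : ℕ}

/-- cyclic distance from `x` to `y` (going forwards). -/
def dd (x y : Fin N) : ℕ := (y - x).val

lemma dd_def (x y : Fin N) :
    dd x y = if x.val ≤ y.val then y.val - x.val else N + y.val - x.val := by
  have hx := x.isLt; have hy := y.isLt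
  rw [dd, Fin.sub_def]
  simp only []
  split_ifs with h
  · have e : N - x.val + y.val = N + (y.val - x.val) := by omega
    rw [e, Nat.add_mod_left, Nat.mod_eq_of_lt (by omega)]
  · rw [Nat.mod_eq_of_lt (by omega)]; omega

lemma dd_lt (x y : Fin N) : dd x y < N := (y - x).isLt

lemma dd_eq_zero_iff {x y : Fin N} : dd x y = 0 ↔ y = x := by
  have hx := x.isLt; have hy := y.isLt
  rw [dd_def, Fin.ext_iff]
  split_ifs <;> omega

lemma dd_pos {x y : Fin N} (h : y ≠ x) : 0 < dd x y := by
  rcases Nat.eq_zero_or_pos (dd x y) with h0 | h0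
  · exact absurd (dd_eq_zero_iff.1 h0) h
  · exact h0

lemma dd_self (x : Fin N) : dd x x = 0 := by rw [dd_def]; simp

lemma dd_inj {x y z : Fin N} (h : dd x y = dd x z) : y = z := by
  have hx := x.isLt; have hy := y.isLt; have hz := z.isLt
  rw [dd_def, dd_def] at h
  rw [Fin.ext_iff]
  split_ifs at h <;> omega

lemma dd_add_or (x y z : Fin N) :
    dd x y + dd y z = dd x z ∨ dd x y + dd y z = dd x z + N := by
  haveI : NeZero N := ⟨by have := x.pos; omega⟩
  have key : (z - y) + (y - x) = z - x := sub_add_sub_cancel z y x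
  have hval : dd x z = (dd y z + dd x y) % N := by
    rw [dd, dd, dd, ← key, Fin.add_def]
  have h1 := dd_lt x y; have h2 := dd_lt y z
  rcases Nat.lt_or_ge (dd y z + dd x y) N with h | h
  · left; rw [hval, Nat.mod_eq_of_lt h]; omega
  · right
    have : (dd y z + dd x y) % N = dd y z + dd x y - N := by
      rw [Nat.mod_eq_sub_mod h, Nat.mod_eq_of_lt (by omega)]
    omega

lemma dd_antisymm {x y : Fin N} (h : y ≠ x) : dd x y + dd y x = N := by
  rcases dd_add_or x y x with h1 | h1
  · rw [dd_self] at h1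
    exact absurd (dd_eq_zero_iff.1 (by omega)) h
  · rw [dd_self] at h1; omega

lemma isSide_pair_iff {u v : Fin N} (huv : u ≠ v) :
    IsSide N {u, v} ↔ dd u v = 1 ∨ dd v u = 1 := by
  have hNu := u.isLt
  have hN2 : 2 ≤ N := by
    rcases Nat.lt_or_ge N 2 with h | h
    · interval_cases N
      · exact absurd u.pos (by omega)
      · exact absurd (Subsingleton.elim u v) huv
    · exact h
  have hcyc : ∀ i : Fin N, dd i (cyc i) = 1 := by
    intro i
    have hi := i.isLt
    have hc : (cyc i).val = (i.val + 1) % N := rfl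
    rw [dd_def, hc]
    rcases Nat.lt_or_ge (i.val + 1) N with h | h
    · rw [Nat.mod_eq_of_lt h]; split_ifs <;> omega
    · have he : (i.val + 1) % N = 0 := by
        have : i.val + 1 = N := by omega
        simp [this]
      rw [he]; split_ifs <;> omega
  constructor
  · rintro ⟨i, hne, hpair⟩
    rcases pair_eq_pair_iff.1 hpair with ⟨rfl, rfl⟩ | ⟨rfl, rfl⟩
    · left; exact hcyc u
    · right; exact hcyc v
  · intro h
    have key : ∀ a b : Fin N, dd a b = 1 → b = cyc a := by
      intro a b hab
      have := a.isLt; have := b.isLt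
      rw [dd_def] at hab
      have hc : (cyc a).val = (a.val + 1) % N := rfl
      rw [Fin.ext_iff, hc]
      split_ifs at hab with h'
      · rw [Nat.mod_eq_of_lt (by omega)]; omega
      · have he : a.val + 1 = N := by omega
        rw [he, Nat.mod_self]; omega
    rcases h with h | h
    · refine ⟨u, ?_, by rw [key u v h]⟩
      intro hc; exact huv (by rw [key u v h, ← hc])
    · refine ⟨v, ?_, ?_⟩
      · intro hc; exact huv.symm (by rw [key v u h, ← hc])
      · rw [key v u h]; exact Finset.pair_comm _ _

lemma crosses_symm {e f : Finset (Fin N)} (h : Crosses N e f) : Crosses N f e := by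
  obtain ⟨a, b, c, d, h1, h2, h3, h4⟩ := h
  exact ⟨a, b, c, d, h1, h2, h3, by tauto⟩

lemma crosses_iff {x z p q : Fin N} :
    Crosses N {x, z} {p, q} ↔
      (0 < dd x p ∧ dd x p < dd x z ∧ dd x z < dd x q) ∨
      (0 < dd x q ∧ dd x q < dd x z ∧ dd x z < dd x p) := by
  have hx := x.isLt; have hz := z.isLt; have hp := p.isLt; have hq := q.isLt
  constructor
  · rintro ⟨a, b, c, d, h1, h2, h3, (⟨he, hf⟩ | ⟨he, hf⟩)⟩ <;>
    rw [Fin.lt_def] at h1 h2 h3 <;>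
    rcases pair_eq_pair_iff.1 he with ⟨rfl, rfl⟩ | ⟨rfl, rfl⟩ <;>
    rcases pair_eq_pair_iff.1 hf with ⟨rfl, rfl⟩ | ⟨rfl, rfl⟩ <;>
    simp only [dd_def] <;> split_ifs <;> omega
  · intro h
    simp only [dd_def] at h
    have flt : ∀ a b : Fin N, a.val < b.val → a < b := fun a b hab => Fin.lt_def.2 hab
    split_ifs at h with c1 c2 c3
    · rcases h with ⟨h1, h2, h3⟩ | ⟨h1, h2, h3⟩
      · exact ⟨x, z, p, q, flt _ _ (by omega), flt _ _ (by omega), flt _ _ (by omega),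
          Or.inl ⟨rfl, rfl⟩⟩
      · exact ⟨x, z, q, p, flt _ _ (by omega), flt _ _ (by omega), flt _ _ (by omega),
          Or.inl ⟨rfl, Finset.pair_comm _ _⟩⟩
    · rcases h with ⟨h1, h2, h3⟩ | ⟨h1, h2, h3⟩
      · exact ⟨q, p, x, z, flt _ _ (by omega), flt _ _ (by omega), flt _ _ (by omega),
          Or.inr ⟨rfl, Finset.pair_comm _ _⟩⟩
      · exfalso; omega
    · rcases h with ⟨h1, h2, h3⟩ | ⟨h1, h2, h3⟩ <;> (exfalso; omega)
    · rcases h with ⟨h1, h2, h3⟩ | ⟨h1, h2, h3⟩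
      · exact ⟨z, x, q, p, flt _ _ (by omega), flt _ _ (by omega), flt _ _ (by omega),
          Or.inl ⟨Finset.pair_comm _ _, Finset.pair_comm _ _⟩⟩
      · exfalso; omega
    · rcases h with ⟨h1, h2, h3⟩ | ⟨h1, h2, h3⟩
      · exfalso; omega
      · exact ⟨p, q, x, z, flt _ _ (by omega), flt _ _ (by omega), flt _ _ (by omega),
          Or.inr ⟨rfl, rfl⟩⟩
    · rcases h with ⟨h1, h2, h3⟩ | ⟨h1, h2, h3⟩ <;> (exfalso; omega)
    · rcases h with ⟨h1, h2, h3⟩ | ⟨h1, h2, h3⟩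
      · exfalso; omega
      · exact ⟨z, x, p, q, flt _ _ (by omega), flt _ _ (by omega), flt _ _ (by omega),
          Or.inl ⟨Finset.pair_comm _ _, rfl⟩⟩
    · rcases h with ⟨h1, h2, h3⟩ | ⟨h1, h2, h3⟩
      · exact ⟨p, q, z, x, flt _ _ (by omega), flt _ _ (by omega), flt _ _ (by omega),
          Or.inr ⟨Finset.pair_comm _ _, rfl⟩⟩
      · exact ⟨q, p, z, x, flt _ _ (by omega), flt _ _ (by omega), flt _ _ (by omega),
          Or.inr ⟨Finset.pair_comm _ _, Finset.pair_comm _ _⟩⟩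


/-! ### IsNext machinery -/

lemma isNext_exists {c : Finset (Fin N)} {x : Fin N} (hx : x ∈ c)
    (h : ∃ z ∈ c, z ≠ x) : ∃ y, IsNext c x y := by
  obtain ⟨z0, hz0, hz0x⟩ := h
  obtain ⟨y, hy, hymin⟩ := Finset.exists_min_image (c.filter (· ≠ x)) (fun u => dd x u)
    ⟨z0, by simp [hz0, hz0x]⟩
  simp only [Finset.mem_filter] at hy
  exact ⟨y, hx, hy.1, hy.2, fun z hz hzx => hymin z (by simp [hz, hzx])⟩

lemma sandwich {c : Finset (Fin N)} {p w1 w2 : Fin N} (hp : p ∉ c) (h1 : w1 ∈ c)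
    (h2 : w2 ∈ c) (hw : w1 ≠ w2) :
    ∃ v v', IsNext c v v' ∧ 0 < dd v p ∧ dd v p < dd v v' := by
  have hcne : c.Nonempty := ⟨w1, h1⟩
  obtain ⟨v, hv, hvmin⟩ := Finset.exists_min_image c (fun u => dd u p) hcne
  obtain ⟨v', hv', hv'min⟩ := Finset.exists_min_image c (fun u => dd p u) hcne
  have hvp : 0 < dd v p := dd_pos (fun h => hp (h ▸ hv))
  have hpv' : 0 < dd p v' := dd_pos (fun h => hp (h ▸ hv'))
  have hvv' : v ≠ v' := by
    intro h; subst h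
    have hex : ∃ u ∈ c, u ≠ v := by
      by_cases h1v : w1 = v
      · exact ⟨w2, h2, by rw [← h1v]; exact hw.symm⟩
      · exact ⟨w1, h1, h1v⟩
    obtain ⟨u, hu, huv⟩ := hex
    have m1 := hvmin u hu
    have m2 := hv'min u hu
    have a1 := dd_antisymm (show p ≠ u from fun h => hp (h ▸ hu))
    have a2 := dd_antisymm (show p ≠ v from fun h => hp (h ▸ hv))
    have heq : dd p u = dd p v := by omega
    exact huv (dd_inj heq)
  have nb1 : ∀ u ∈ c, ¬ (0 < dd v u ∧ dd v u < dd v p) := by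
    intro u hu hg
    have m1 := hvmin u hu
    have t := dd_add_or v u p
    have := dd_lt u p
    omega
  have nb2 : ∀ u ∈ c, ¬ (0 < dd p u ∧ dd p u < dd p v') := by
    intro u hu hg
    have m2 := hv'min u hu
    omega
  have hA : dd v v' = dd v p + dd p v' := by
    rcases dd_add_or v p v' with t | t
    · omega
    · have hn := nb1 v' hv'
      have := dd_pos (show v' ≠ v from fun h => hvv' h.symm)
      have := dd_lt p v'
      omega
  refine ⟨v, v', ⟨hv, hv', fun h => hvv' h.symm, ?_⟩, hvp, by omega⟩
  intro u hu huv
  show dd v v' ≤ dd v u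
  by_contra hcon
  push_neg at hcon
  have t := dd_add_or v p u
  have hd1 := nb1 u hu
  have hd2 := nb2 u hu
  have hu0 : 0 < dd v u := dd_pos huv
  have hne : dd v u ≠ dd v p := fun h => hp ((dd_inj h) ▸ hu)
  have := dd_lt v u
  have := dd_lt p u
  omega

/-! ### chords of a cell do not cross diagonals -/

lemma chord_no_cross {S : Finset (Finset (Fin N))} {c : Finset (Fin N)}
    (hS : IsDissection N S)
    (hc2 : ∀ x y : Fin N, IsNext c x y → IsSide N {x, y} ∨ {x, y} ∈ S)
    {x z p q : Fin N} (hx : x ∈ c) (hz : z ∈ c) (hf : {p, q} ∈ S)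
    (h1 : 0 < dd x p) (h2 : dd x p < dd x z) (h3 : dd x z < dd x q)
    (hpc : p ∉ c) : False := by
  have hzx : z ≠ x := fun h => by rw [h, dd_self] at h2; omega
  obtain ⟨v, v', hnx, h5, h6⟩ := sandwich hpc hx hz (Ne.symm hzx)
  obtain ⟨hvc, hv'c, hv'v, hmin⟩ := hnx
  have mz : dd v v' ≤ dd v z ∨ dd v z = 0 := by
    by_cases h : z = v
    · right; rw [h, dd_self]
    · left; exact hmin z hz h
  have mx : dd v v' ≤ dd v x ∨ dd v x = 0 := by
    by_cases h : x = v
    · right; rw [h, dd_self]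
    · left; exact hmin x hx h
  have a1 := dd_add_or x v p
  have a2 := dd_add_or x v z
  have a3 := dd_add_or x v q
  have a4 := dd_add_or x v v'
  have a5 := dd_add_or x v x
  have b1 := dd_lt x p; have b2 := dd_lt x z; have b3 := dd_lt x q
  have b4 := dd_lt x v; have b5 := dd_lt x v'
  have b6 := dd_lt v p; have b7 := dd_lt v v'; have b8 := dd_lt v z
  have b9 := dd_lt v q; have b10 := dd_lt v x
  have hvp' : dd x v ≠ dd x p := fun h => hpc ((dd_inj h) ▸ hvc)
  have hv'p : dd x v' ≠ dd x p := fun h => hpc ((dd_inj h) ▸ hv'c)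
  rw [dd_self] at a5
  have key : dd v v' < dd v q := by omega
  rcases hc2 v v' ⟨hvc, hv'c, hv'v, hmin⟩ with hside | hmem
  · rcases (isSide_pair_iff (show v ≠ v' from fun h => hv'v h.symm)).1 hside with h | h
    · omega
    · have a6 := dd_add_or v v' v
      rw [dd_self] at a6
      omega
  · exact hS.2 _ hmem _ hf (crosses_iff.2 (Or.inl ⟨h5, h6, key⟩))

lemma chord_no_cross_mem {S : Finset (Finset (Fin N))} {c : Finset (Fin N)}
    (hS : IsDissection N S)
    (hc3 : ∀ e ∈ S, e ⊆ c → ∃ x y, e = ({x, y} : Finset (Fin N)) ∧ (IsNext c x y ∨ IsNext c y x))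
    {x z p q : Fin N} (hx : x ∈ c) (hz : z ∈ c) (hf : {p, q} ∈ S)
    (h1 : 0 < dd x p) (h2 : dd x p < dd x z) (h3 : dd x z < dd x q)
    (hq4 : dd x q < N)
    (hpc : p ∈ c) (hqc : q ∈ c) : False := by
  have hsub : ({p, q} : Finset (Fin N)) ⊆ c := by
    intro u hu; simp only [Finset.mem_insert, Finset.mem_singleton] at hu
    rcases hu with rfl | rfl <;> assumption
  obtain ⟨x', y', hpair, hor⟩ := hc3 _ hf hsub
  have hred : IsNext c p q ∨ IsNext c q p := by
    rcases pair_eq_pair_iff.1 hpair with ⟨h1', h2'⟩ | ⟨h1', h2'⟩ <;>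
      rw [← h1', ← h2'] at hor <;> tauto
  have a1 := dd_add_or x p q
  have a2 := dd_add_or x p z
  have a3 := dd_add_or x q x
  have a4 := dd_add_or x q p
  rw [dd_self] at a3
  have b1 := dd_lt p q; have b2 := dd_lt p z; have b3 := dd_lt q x
  have b4 := dd_lt q p; have b5 := dd_lt x z
  rcases hred with hn | hn
  · have hm := hn.2.2.2 z hz (fun h => by rw [h] at h2; omega)
    have : dd p q ≤ dd p z := hm
    omega
  · have hm := hn.2.2.2 x hx (fun h => by rw [h, dd_self] at h3; omega)
    have : dd q p ≤ dd q x := hm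
    omega

lemma chord_compat {S : Finset (Finset (Fin N))} {c : Finset (Fin N)}
    (hS : IsDissection N S)
    (hc2 : ∀ x y : Fin N, IsNext c x y → IsSide N {x, y} ∨ {x, y} ∈ S)
    (hc3 : ∀ e ∈ S, e ⊆ c → ∃ x y, e = ({x, y} : Finset (Fin N)) ∧ (IsNext c x y ∨ IsNext c y x))
    {x z : Fin N} (hx : x ∈ c) (hz : z ∈ c) :
    ∀ f ∈ S, ¬ Crosses N {x, z} f := by
  intro f hfS hcr
  obtain ⟨p, q, hpq, rfl⟩ := Finset.card_eq_two.1 ((hS.1 f hfS).1)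
  have hswap : ∀ p' q' : Fin N, {p', q'} ∈ S →
      0 < dd x p' → dd x p' < dd x z → dd x z < dd x q' → False := by
    intro p' q' hf' g1 g2 g3
    by_cases hpc : p' ∈ c
    · by_cases hqc : q' ∈ c
      · exact chord_no_cross_mem hS hc3 hx hz hf' g1 g2 g3 (dd_lt x q') hpc hqc
      · -- swap base to z; q' plays the inner role
        have a1 := dd_add_or x z q'
        have a2 := dd_add_or x z x
        have a3 := dd_add_or x z p'
        rw [dd_self] at a2
        have b1 := dd_lt x q'; have b2 := dd_lt z q'; have b3 := dd_lt z x
        have b4 := dd_lt z p'; have b5 := dd_lt x z; have b6 := dd_lt x p'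
        refine chord_no_cross hS hc2 hz hx (Finset.pair_comm p' q' ▸ hf')
          ?_ ?_ ?_ hqc <;> omega
    · exact chord_no_cross hS hc2 hx hz hf' g1 g2 g3 hpc
  rcases crosses_iff.1 hcr with ⟨g1, g2, g3⟩ | ⟨g1, g2, g3⟩
  · exact hswap p q hfS g1 g2 g3
  · exact hswap q p (Finset.pair_comm p q ▸ hfS) g1 g2 g3

/-! ### maximal dissections have only triangular cells -/

theorem max_imp_triangles {S : Finset (Finset (Fin N))} (hS : IsDissection N S)
    (hmax : ∀ e, IsDiag N e → (∀ f ∈ S, ¬ Crosses N e f) → e ∈ S) :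
    ∀ c, IsCell N S c → c.card = 3 := by
  intro c hcell
  obtain ⟨hcard, hc2, hc3⟩ := hcell
  by_contra hne3
  obtain ⟨x, hx⟩ := Finset.card_pos.1 (show 0 < c.card by omega)
  obtain ⟨y, hyn⟩ := isNext_exists hx (Finset.exists_mem_ne (show 1 < c.card by omega) x)
  obtain ⟨hx', hyc, hyx, hminx⟩ := hyn
  obtain ⟨z, hzn⟩ := isNext_exists hyc ⟨x, hx, fun h => hyx h.symm⟩
  obtain ⟨hy', hzc, hzy, hminy⟩ := hzn
  have hsub3 : ¬ c ⊆ {x, y, z} := by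
    intro hsub
    have hle := Finset.card_le_card hsub
    have t1 := Finset.card_insert_le x ({y, z} : Finset (Fin N))
    have t2 := Finset.card_insert_le y ({z} : Finset (Fin N))
    have t3 : ({z} : Finset (Fin N)).card = 1 := Finset.card_singleton z
    omega
  obtain ⟨w, hwc, hwn⟩ := Finset.not_subset.1 hsub3
  simp only [Finset.mem_insert, Finset.mem_singleton, not_or] at hwn
  obtain ⟨hwx, hwy, hwz⟩ := hwn
  have my_w : dd x y ≤ dd x w := hminx w hwc hwx
  have my_z : dd x y ≤ dd x z ∨ dd x z = 0 := by
    by_cases h : z = x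
    · right; rw [h, dd_self]
    · left; exact hminx z hzc h
  have mz_w : dd y z ≤ dd y w := hminy w hwc hwy
  have i1 : dd x w ≠ dd x y := fun h => hwy (dd_inj h)
  have i2 : dd x w ≠ dd x z := fun h => hwz (dd_inj h)
  have i3 : dd x z ≠ dd x y := fun h => hzy (dd_inj h)
  have p1 : 0 < dd x y := dd_pos hyx
  have p2 : 0 < dd y z := dd_pos hzy
  have p3 : 0 < dd x w := dd_pos hwx
  have a1 := dd_add_or x y z
  have a2 := dd_add_or x y w
  have a3 := dd_add_or x y x
  rw [dd_self] at a3
  have b1 := dd_lt x y; have b2 := dd_lt x z; have b3 := dd_lt x w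
  have b4 := dd_lt y z; have b5 := dd_lt y w; have b6 := dd_lt y x
  have key1 : 0 < dd x y ∧ dd x y < dd x z ∧ dd x z < dd x w := by omega
  obtain ⟨k1, k2, k3⟩ := key1
  have hzx : z ≠ x := fun h => by rw [h, dd_self] at k2; omega
  have hdiag : IsDiag N {x, z} := by
    refine ⟨Finset.card_pair (Ne.symm hzx), ?_⟩
    intro hside
    rcases (isSide_pair_iff (Ne.symm hzx)).1 hside with h | h
    · omega
    · have a4 := dd_add_or x z x
      rw [dd_self] at a4
      omega
  have hmem := hmax _ hdiag (chord_compat hS hc2 hc3 hx hzc)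
  obtain ⟨x', y', hpair, hor⟩ := hc3 _ hmem
    (by intro u hu; simp only [Finset.mem_insert, Finset.mem_singleton] at hu
        rcases hu with rfl | rfl <;> assumption)
  have hred : IsNext c x z ∨ IsNext c z x := by
    rcases pair_eq_pair_iff.1 hpair with ⟨h1', h2'⟩ | ⟨h1', h2'⟩ <;>
      rw [← h1', ← h2'] at hor <;> tauto
  rcases hred with hn | hn
  · have := hn.2.2.2 y hyc hyx
    have : dd x z ≤ dd x y := this
    omega
  · have hm := hn.2.2.2 w hwc hwz
    have hm' : dd z x ≤ dd z w := hm
    have a5 := dd_add_or x z w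
    have a6 := dd_add_or x z x
    rw [dd_self] at a6
    have b7 := dd_lt z w; have b8 := dd_lt z x
    omega
/-! ### triangles → maximal -/

def inA (p q v : Fin N) : Prop := 0 < dd p v ∧ dd p v < dd p q

instance (p q v : Fin N) : Decidable (inA p q v) := by unfold inA; infer_instance

def Excl (S : Finset (Finset (Fin N))) (a b v : Fin N) : Prop :=
  ∃ f ∈ S, ∃ p q : Fin N, f = {p, q} ∧ inA p q v ∧ ¬ inA p q a ∧ ¬ inA p q b

lemma dd_add_one [NeZero N] (hN : 2 ≤ N) (x : Fin N) : dd x (x + 1) = 1 := by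
  rw [dd, add_sub_cancel_left, Fin.val_one', Nat.mod_eq_of_lt (by omega)]

lemma crosses_of_interleave {x p q r s : Fin N}
    (h1 : dd x p < dd x r) (h2 : dd x r < dd x q) (h3 : dd x q < dd x s) :
    Crosses N {p, q} {r, s} := by
  have A1 := dd_add_or x p r
  have A2 := dd_add_or x p q
  have A3 := dd_add_or x p s
  have B1 := dd_lt p r; have B2 := dd_lt p q; have B3 := dd_lt p s
  have B4 := dd_lt x s; have B5 := dd_lt x r; have B6 := dd_lt x q
  exact crosses_iff.2 (Or.inl ⟨by omega, by omega, by omega⟩)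

lemma far_arc_max {S : Finset (Finset (Fin N))} {a b x y : Fin N} (hS : IsDissection N S)
    (hY : 2 ≤ dd x y)
    (hxE : ¬ Excl S a b x) (hyE : ¬ Excl S a b y)
    (hall : ∀ w, 0 < dd x w → dd x w < dd x y → Excl S a b w) :
    {x, y} ∈ S := by
  classical
  have hN : 3 ≤ N := by have := dd_lt x y; omega
  haveI : NeZero N := ⟨by omega⟩
  set T : Finset (Fin N × Fin N) := Finset.univ.filter
    (fun pq => {pq.1, pq.2} ∈ S ∧ ¬ inA pq.1 pq.2 a ∧ ¬ inA pq.1 pq.2 b ∧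
      dd x pq.1 < dd x pq.2 ∧ dd x pq.2 ≤ dd x y) with hT
  have hTmem : ∀ p q : Fin N, (p, q) ∈ T ↔ ({p, q} ∈ S ∧ ¬ inA p q a ∧ ¬ inA p q b ∧
      dd x p < dd x q ∧ dd x q ≤ dd x y) := by
    intro p q; simp [hT]
  have hkey : ∀ w, 0 < dd x w → dd x w < dd x y →
      ∃ p q, (p, q) ∈ T ∧ dd x p < dd x w ∧ dd x w < dd x q := by
    intro w hw1 hw2
    obtain ⟨f, hfS, p, q, rfl, hinw, hina, hinb⟩ := hall w hw1 hw2
    have hxn : ¬ inA p q x := fun h => hxE ⟨_, hfS, p, q, rfl, h, hina, hinb⟩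
    have hyn : ¬ inA p q y := fun h => hyE ⟨_, hfS, p, q, rfl, h, hina, hinb⟩
    unfold inA at hinw hxn hyn
    have A1 := dd_add_or x p w
    have A2 := dd_add_or x p q
    have A3 := dd_add_or x p y
    have A4 := dd_add_or x p x
    rw [dd_self] at A4
    have B1 := dd_lt x p; have B2 := dd_lt x q; have B3 := dd_lt x y
    have B4 := dd_lt p q; have B5 := dd_lt p w; have B6 := dd_lt p x
    have B7 := dd_lt p y; have B8 := dd_lt x w
    exact ⟨p, q, (hTmem p q).2 ⟨hfS, hina, hinb, by omega, by omega⟩, by omega, by omega⟩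
  have hx1 : dd x (x + 1) = 1 := dd_add_one (by omega) x
  obtain ⟨p0, q0, hT0, _, _⟩ := hkey (x + 1) (by omega) (by omega)
  obtain ⟨pq, hpqT, hmaxT⟩ := Finset.exists_max_image T
    (fun pq => dd x pq.2 - dd x pq.1) ⟨(p0, q0), hT0⟩
  obtain ⟨p, q⟩ := pq
  obtain ⟨hfS, hfa, hfb, hLR, hRY⟩ := (hTmem p q).1 hpqT
  have hL : dd x p = 0 := by
    by_contra hL0
    have hL0' : 0 < dd x p := Nat.pos_of_ne_zero hL0
    obtain ⟨p', q', hT', h1', h2'⟩ := hkey p hL0' (by omega)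
    obtain ⟨hfS', hfa', hfb', hLR', hRY'⟩ := (hTmem p' q').1 hT'
    have hmm := hmaxT (p', q') hT'
    simp only at hmm
    rcases Nat.lt_or_ge (dd x q') (dd x q) with hlt | hge
    · exact hS.2 _ hfS' _ hfS (crosses_of_interleave h1' h2' hlt)
    · omega
  have hR : dd x q = dd x y := by
    by_contra hR0
    have hRlt : dd x q < dd x y := lt_of_le_of_ne hRY hR0
    have hq0 : 0 < dd x q := by omega
    obtain ⟨p'', q'', hT'', h1'', h2''⟩ := hkey q hq0 hRlt
    obtain ⟨hfS'', hfa'', hfb'', hLR'', hRY''⟩ := (hTmem p'' q'').1 hT''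
    have hmm := hmaxT (p'', q'') hT''
    simp only at hmm
    rcases Nat.eq_zero_or_pos (dd x p'') with hz | hpos
    · omega
    · exact hS.2 _ hfS _ hfS'' (crosses_of_interleave (by omega) h1'' h2'')
  have hpx : p = x := dd_inj (show dd x p = dd x x by rw [hL, dd_self])
  have hqy : q = y := dd_inj (show dd x q = dd x y from hR)
  rw [hpx, hqy] at hfS
  exact hfS

lemma cell2_excl {S : Finset (Finset (Fin N))} {a b : Fin N} {c : Finset (Fin N)}
    (hS : IsDissection N S) (hmem : ∀ v, v ∈ c ↔ ¬ Excl S a b v)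
    {x y : Fin N} (hnx : IsNext c x y) : IsSide N {x, y} ∨ {x, y} ∈ S := by
  by_cases hside : IsSide N {x, y}
  · exact Or.inl hside
  right
  obtain ⟨hxc, hyc, hyx, hmin⟩ := hnx
  have hY : 2 ≤ dd x y := by
    have h1 : 0 < dd x y := dd_pos hyx
    rw [isSide_pair_iff (Ne.symm hyx)] at hside
    push_neg at hside
    omega
  refine far_arc_max hS hY ((hmem x).1 hxc) ((hmem y).1 hyc) ?_
  intro w hw1 hw2
  have hwx : w ≠ x := fun h => by rw [h, dd_self] at hw1; omega
  have hwc : w ∉ c := fun hwc => by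
    have : dd x y ≤ dd x w := hmin w hwc hwx
    omega
  by_contra h
  exact hwc ((hmem w).2 h)

lemma cell3_excl {S : Finset (Finset (Fin N))} {a b : Fin N} {c : Finset (Fin N)}
    (hS : IsDissection N S) (hmem : ∀ v, v ∈ c ↔ ¬ Excl S a b v)
    (hcompat : ∀ f ∈ S, ¬ Crosses N {a, b} f) :
    ∀ e ∈ S, e ⊆ c → ∃ x y, e = ({x, y} : Finset (Fin N)) ∧ (IsNext c x y ∨ IsNext c y x) := by
  intro f hfS hsub
  obtain ⟨p, q, hpq, rfl⟩ := Finset.card_eq_two.1 ((hS.1 _ hfS).1)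
  have hpc : p ∈ c := hsub (by simp)
  have hqc : q ∈ c := hsub (by simp)
  have main : ∀ p' q' : Fin N, {p', q'} ∈ S → p' ∈ c → q' ∈ c → q' ≠ p' →
      ¬ inA p' q' a → ¬ inA p' q' b → IsNext c p' q' := by
    intro p' q' hfS' hp' hq' hne hfa hfb
    refine ⟨hp', hq', hne, ?_⟩
    intro z hz hzp
    show dd p' q' ≤ dd p' z
    by_contra hcon
    push_neg at hcon
    have hz0 : 0 < dd p' z := dd_pos hzp
    exact ((hmem z).1 hz) ⟨_, hfS', p', q', rfl, ⟨hz0, hcon⟩, hfa, hfb⟩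
  have hfar : (¬ inA p q a ∧ ¬ inA p q b) ∨ (¬ inA q p a ∧ ¬ inA q p b) := by
    have A1 := dd_add_or p q a
    have A2 := dd_add_or p q b
    have A3 := dd_add_or p q p
    rw [dd_self] at A3
    have B1 := dd_lt p a; have B2 := dd_lt p b; have B3 := dd_lt p q
    have B4 := dd_lt q a; have B5 := dd_lt q b; have B6 := dd_lt q p
    by_cases hA : inA p q a
    · right
      constructor
      · intro h
        unfold inA at hA h
        omega
      · intro hB
        unfold inA at hA hB
        exact hcompat _ hfS (crosses_symm (crosses_iff.2 (Or.inl ⟨by omega, by omega, by omega⟩)))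
    · by_cases hB : inA p q b
      · right
        constructor
        · intro hA2
          unfold inA at hB hA2
          exact hcompat _ hfS (crosses_symm (crosses_iff.2 (Or.inr ⟨by omega, by omega, by omega⟩)))
        · intro h
          unfold inA at hB h
          omega
      · left; exact ⟨hA, hB⟩
  rcases hfar with ⟨hfa, hfb⟩ | ⟨hfa, hfb⟩
  · exact ⟨p, q, rfl, Or.inl (main p q hfS hpc hqc (Ne.symm hpq) hfa hfb)⟩
  · exact ⟨q, p, Finset.pair_comm p q,
      Or.inl (main q p (Finset.pair_comm p q ▸ hfS) hqc hpc hpq hfa hfb)⟩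

theorem triangles_imp_max {S : Finset (Finset (Fin N))} (hS : IsDissection N S)
    (htri : ∀ c, IsCell N S c → c.card = 3) :
    ∀ e, IsDiag N e → (∀ f ∈ S, ¬ Crosses N e f) → e ∈ S := by
  intro e hdiag hcompat
  by_contra heS
  classical
  obtain ⟨a, b, hab, rfl⟩ := Finset.card_eq_two.1 hdiag.1
  set c : Finset (Fin N) := Finset.univ.filter (fun v => ¬ Excl S a b v) with hcdef
  have hmem : ∀ v, v ∈ c ↔ ¬ Excl S a b v := fun v => by simp [hcdef]
  have haE : ¬ Excl S a b a := by rintro ⟨f, hf, p, q, hfe, h1, h2, h3⟩; exact h2 h1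
  have hbE : ¬ Excl S a b b := by rintro ⟨f, hf, p, q, hfe, h1, h2, h3⟩; exact h3 h1
  have hswap : ∀ v, Excl S b a v ↔ Excl S a b v := by
    intro v
    constructor <;> rintro ⟨f, hf, p, q, h1, h2, h3, h4⟩ <;> exact ⟨f, hf, p, q, h1, h2, h4, h3⟩
  have hYab : 2 ≤ dd a b ∧ 2 ≤ dd b a := by
    have h1 : 0 < dd a b := dd_pos (Ne.symm hab)
    have h2 : 0 < dd b a := dd_pos hab
    have hns := hdiag.2
    rw [isSide_pair_iff hab] at hns
    push_neg at hns
    omega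
  have hv1 : ∃ w ∈ c, 0 < dd a w ∧ dd a w < dd a b := by
    by_contra hno
    push_neg at hno
    refine heS (far_arc_max hS hYab.1 haE hbE ?_)
    intro w hw1 hw2
    by_contra hEx
    have hwc : w ∈ c := (hmem w).2 hEx
    have := hno w hwc hw1
    omega
  obtain ⟨w1, hw1c, hw1a, hw1b⟩ := hv1
  have hv2 : ∃ w ∈ c, 0 < dd b w ∧ dd b w < dd b a := by
    by_contra hno
    push_neg at hno
    have hba : {b, a} ∈ S := by
      refine far_arc_max hS hYab.2 (fun h => hbE ((hswap b).1 h))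
        (fun h => haE ((hswap a).1 h)) ?_
      intro w hw1 hw2
      by_contra hEx
      have hwc : w ∈ c := (hmem w).2 (fun h => hEx ((hswap w).2 h))
      have := hno w hwc hw1
      omega
    exact heS (Finset.pair_comm b a ▸ hba)
  obtain ⟨w2, hw2c, hw2a, hw2b⟩ := hv2
  have hanti := dd_antisymm (Ne.symm hab)
  have hw2gt : dd a b < dd a w2 ∧ dd a w2 < N := by
    have A := dd_add_or a b w2
    have B := dd_lt a w2
    omega
  have n1 : a ≠ w1 := fun h => by rw [← h, dd_self] at hw1a; omega
  have n2 : a ≠ b := hab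
  have n3 : a ≠ w2 := fun h => by rw [← h, dd_self] at hw2gt; omega
  have n4 : w1 ≠ b := fun h => by rw [h] at hw1b; omega
  have n5 : w1 ≠ w2 := fun h => by rw [h] at hw1b; omega
  have n6 : b ≠ w2 := fun h => by rw [← h] at hw2gt; omega
  have hac : a ∈ c := (hmem a).2 haE
  have hbc : b ∈ c := (hmem b).2 hbE
  have hsub4 : ({a, w1, b, w2} : Finset (Fin N)) ⊆ c := by
    intro u hu
    simp only [Finset.mem_insert, Finset.mem_singleton] at hu
    rcases hu with rfl | rfl | rfl | rfl <;> assumption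
  have hcard4 : ({a, w1, b, w2} : Finset (Fin N)).card = 4 := by
    rw [Finset.card_insert_of_notMem (by simp [n1, n2, n3]),
        Finset.card_insert_of_notMem (by simp [n4, n5]),
        Finset.card_pair n6]
  have hcell : IsCell N S c := by
    refine ⟨?_, fun x y hxy => cell2_excl hS hmem hxy, cell3_excl hS hmem hcompat⟩
    have := Finset.card_le_card hsub4
    omega
  have := htri c hcell
  have := Finset.card_le_card hsub4
  omega
/-! ### val characterizations -/

lemma isSide_iff_val {u v : Fin N} (huv : u ≠ v) :
    IsSide N {u, v} ↔ (v.val = u.val + 1 ∨ u.val = v.val + 1 ∨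
      (v.val = 0 ∧ u.val = N - 1) ∨ (u.val = 0 ∧ v.val = N - 1)) := by
  have hu := u.isLt; have hv := v.isLt
  have hne : u.val ≠ v.val := fun h => huv (Fin.ext h)
  rw [isSide_pair_iff huv, dd_def, dd_def]
  split_ifs <;> omega

lemma crosses_iff_val {p q r s : Fin N} (hpq : p.val < q.val) (hrs : r.val < s.val) :
    Crosses N {p, q} {r, s} ↔
      (p.val < r.val ∧ r.val < q.val ∧ q.val < s.val) ∨
      (r.val < p.val ∧ p.val < s.val ∧ s.val < q.val) := by
  constructor
  · rintro ⟨a, b, c, d, h1, h2, h3, (⟨he, hf⟩ | ⟨he, hf⟩)⟩ <;>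
    rw [Fin.lt_def] at h1 h2 h3 <;>
    rcases pair_eq_pair_iff.1 he with ⟨rfl, rfl⟩ | ⟨rfl, rfl⟩ <;>
    rcases pair_eq_pair_iff.1 hf with ⟨rfl, rfl⟩ | ⟨rfl, rfl⟩ <;>
    [skip; skip; skip; skip; skip; skip; skip; skip] <;> omega
  · rintro (⟨h1, h2, h3⟩ | ⟨h1, h2, h3⟩)
    · exact ⟨p, q, r, s, Fin.lt_def.2 h1, Fin.lt_def.2 h2, Fin.lt_def.2 h3, Or.inl ⟨rfl, rfl⟩⟩
    · exact ⟨r, s, p, q, Fin.lt_def.2 h1, Fin.lt_def.2 h2, Fin.lt_def.2 h3, Or.inr ⟨rfl, rfl⟩⟩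

lemma exists_pair_lt {e : Finset (Fin N)} (he : e.card = 2) :
    ∃ p q : Fin N, p.val < q.val ∧ e = {p, q} := by
  obtain ⟨p, q, hpq, rfl⟩ := Finset.card_eq_two.1 he
  have : p.val ≠ q.val := fun h => hpq (Fin.ext h)
  rcases Nat.lt_or_ge p.val q.val with h | h
  · exact ⟨p, q, h, rfl⟩
  · exact ⟨q, p, by omega, Finset.pair_comm p q⟩

lemma mem_pair' {u a b : Fin N} : u ∈ ({a, b} : Finset (Fin N)) ↔ u = a ∨ u = b := by
  simp

/-- separation: an edge with all values ≤ k cannot cross an edge with all values ≥ k. -/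
lemma sep_no_cross {k : ℕ} {e f : Finset (Fin N)}
    (he : ∀ v ∈ e, v.val ≤ k) (hf : ∀ v ∈ f, k ≤ v.val) : ¬ Crosses N e f := by
  rintro ⟨a, b, c, d, h1, h2, h3, (⟨rfl, rfl⟩ | ⟨rfl, rfl⟩)⟩ <;>
  rw [Fin.lt_def] at h1 h2 h3
  · have hb := he b (by simp)
    have hc := hf c (by simp)
    omega
  · have hc := he c (by simp)
    have ha := hf a (by simp)
    omega
/-! ### transport along an interval embedding -/

def upT {n t m : ℕ} (htm : m + t ≤ n + 3) (v : Fin m) : Fin (n + 3) :=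
  Fin.castLE htm (v.addNat t)

def cT {n : ℕ} (t m : ℕ) (htm : m + t ≤ n + 3) (hm : 1 ≤ m) : Finset (Fin (n + 3)) :=
  {⟨t, by omega⟩, ⟨t + m - 1, by omega⟩}

section Transport

variable {n t m : ℕ} (htm : m + t ≤ n + 3) (hm : 2 ≤ m)

lemma upT_val (v : Fin m) : (upT htm v).val = v.val + t := rfl

lemma upT_inj : Function.Injective (upT htm) := by
  intro a b h
  have := congrArg Fin.val h
  simp only [upT_val] at this
  exact Fin.ext (by omega)

lemma upT_pair (a b : Fin m) :
    ({a, b} : Finset (Fin m)).image (upT htm) = {upT htm a, upT htm b} := by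
  simp

lemma upT_ne {a b : Fin m} (hab : a.val < b.val) : upT htm a ≠ upT htm b :=
  fun h => by have := congrArg Fin.val h; simp only [upT_val] at this; omega

lemma crosses_upT_iff {a b c d : Fin m} (hab : a.val < b.val) (hcd : c.val < d.val) :
    Crosses (n + 3) {upT htm a, upT htm b} {upT htm c, upT htm d} ↔
      Crosses m {a, b} {c, d} := by
  rw [crosses_iff_val (show (upT htm a).val < (upT htm b).val by
        simp only [upT_val]; omega)
      (show (upT htm c).val < (upT htm d).val by simp only [upT_val]; omega),
    crosses_iff_val hab hcd]
  simp only [upT_val]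
  omega

lemma side_upT_iff {a b : Fin m} (hab : a.val < b.val) :
    (IsSide (n + 3) {upT htm a, upT htm b} ∨
      ({upT htm a, upT htm b} : Finset (Fin (n + 3))) = cT t m htm (by omega)) ↔
    IsSide m {a, b} := by
  have hne : upT htm a ≠ upT htm b := upT_ne htm hab
  have hne' : a ≠ b := fun h => by rw [h] at hab; omega
  have ha := a.isLt; have hb := b.isLt
  rw [isSide_iff_val hne, isSide_iff_val hne', cT, pair_eq_pair_iff]
  simp only [Fin.ext_iff, upT_val]
  omega

lemma diag_upT_iff {a b : Fin m} (hab : a.val < b.val) :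
    (IsDiag (n + 3) {upT htm a, upT htm b} ∧
      ({upT htm a, upT htm b} : Finset (Fin (n + 3))) ≠ cT t m htm (by omega)) ↔
    IsDiag m {a, b} := by
  have hne : upT htm a ≠ upT htm b := upT_ne htm hab
  have hne' : a ≠ b := fun h => by rw [h] at hab; omega
  have hc1 : ({upT htm a, upT htm b} : Finset (Fin (n + 3))).card = 2 :=
    Finset.card_pair hne
  have hc2 : ({a, b} : Finset (Fin m)).card = 2 := Finset.card_pair hne'
  have hside := side_upT_iff htm hm hab
  unfold IsDiag
  constructor
  · rintro ⟨⟨_, hns⟩, hnc⟩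
    exact ⟨hc2, fun hs => by rcases hside.2 hs with h | h; exacts [hns h, hnc h]⟩
  · rintro ⟨_, hns⟩
    exact ⟨⟨hc1, fun hs => hns (hside.1 (Or.inl hs))⟩, fun hc => hns (hside.1 (Or.inr hc))⟩

end Transport
/-! ### the apex of a triangulated polygon -/

section Apex

variable {n : ℕ}

def v0 : Fin (n + 3) := ⟨0, by omega⟩
def vlast : Fin (n + 3) := ⟨n + 2, by omega⟩

def IsApex (S : Finset (Finset (Fin (n + 3)))) (k : Fin (n + 3)) : Prop :=
  1 ≤ k.val ∧ k.val ≤ n + 1 ∧ (k.val = 1 ∨ {v0, k} ∈ S) ∧ (k.val = n + 1 ∨ {k, vlast} ∈ S)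

lemma apex_exists {S : Finset (Finset (Fin (n + 3)))} (hdiss : IsDissection (n + 3) S)
    (hmax : ∀ e, IsDiag (n + 3) e → (∀ f ∈ S, ¬ Crosses (n + 3) e f) → e ∈ S) :
    ∃ k : Fin (n + 3), IsApex S k := by
  classical
  set C : Finset (Fin (n + 3)) := Finset.univ.filter
    (fun x => 1 ≤ x.val ∧ x.val ≤ n + 1 ∧ (x.val = 1 ∨ {v0, x} ∈ S)) with hC
  have hC1 : (⟨1, by omega⟩ : Fin (n + 3)) ∈ C := by simp [hC]
  obtain ⟨K, hKC, hKmax⟩ := Finset.exists_max_image C (fun x => x.val) ⟨_, hC1⟩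
  simp only [hC, Finset.mem_filter, Finset.mem_univ, true_and] at hKC
  obtain ⟨hK1, hK2, hK3⟩ := hKC
  refine ⟨K, hK1, hK2, hK3, ?_⟩
  by_cases hKn : K.val = n + 1
  · exact Or.inl hKn
  right
  apply hmax
  · constructor
    · exact Finset.card_pair (fun h => by
        have := congrArg Fin.val h; simp only [vlast] at this; omega)
    · intro hs
      rw [isSide_iff_val (fun h => by
        have := congrArg Fin.val h; simp only [vlast] at this; omega)] at hs
      simp only [vlast] at hs
      omega
  · intro f hf hcr
    obtain ⟨p, q, hpq, rfl⟩ := exists_pair_lt (hdiss.1 f hf).1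
    rw [crosses_iff_val (show K.val < (vlast : Fin (n + 3)).val by
      simp only [vlast]; omega) hpq] at hcr
    have hq := q.isLt
    have hvl : (vlast : Fin (n + 3)).val = n + 2 := rfl
    rcases hcr with ⟨h1, h2, h3⟩ | ⟨h1, h2, h3⟩
    · rw [hvl] at h2; omega
    · rw [hvl] at h3
      by_cases hp0 : p.val = 0
      · have hpv0 : p = v0 := Fin.ext (by simp only [v0]; omega)
        have hqC : q ∈ C := by
          simp only [hC, Finset.mem_filter, Finset.mem_univ, true_and]
          exact ⟨by omega, by omega, Or.inr (hpv0 ▸ hf)⟩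
        have := hKmax q hqC
        omega
      · have hK3' : {v0, K} ∈ S := by
          rcases hK3 with h | h
          · omega
          · exact h
        refine hdiss.2 _ hK3' _ hf ?_
        rw [crosses_iff_val (show (v0 : Fin (n + 3)).val < K.val by
          simp only [v0]; omega) hpq]
        left
        refine ⟨by simp only [v0]; omega, h1, h2⟩

lemma apex_unique {S : Finset (Finset (Fin (n + 3)))} (hdiss : IsDissection (n + 3) S)
    {k k' : Fin (n + 3)} (h : IsApex S k) (h' : IsApex S k') : k = k' := by
  have main : ∀ a b : Fin (n + 3), IsApex S a → IsApex S b → a.val < b.val → False := by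
    intro a b ha hb hab
    obtain ⟨ha1, ha2, ha3, ha4⟩ := ha
    obtain ⟨hb1, hb2, hb3, hb4⟩ := hb
    have hbS : {v0, b} ∈ S := by
      rcases hb3 with hh | hh
      · omega
      · exact hh
    have haS : {a, vlast} ∈ S := by
      rcases ha4 with hh | hh
      · omega
      · exact hh
    refine hdiss.2 _ hbS _ haS ?_
    rw [crosses_iff_val (show (v0 : Fin (n + 3)).val < b.val by simp only [v0]; omega)
      (show a.val < (vlast : Fin (n + 3)).val by simp only [vlast]; omega)]
    left
    exact ⟨by simp only [v0]; omega, hab, by simp only [vlast]; omega⟩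
  rcases lt_trichotomy k.val k'.val with hh | hh | hh
  · exact absurd (main k k' h h' hh) (by simp)
  · exact Fin.ext hh
  · exact absurd (main k' k h' h hh) (by simp)

lemma compat_split {S : Finset (Finset (Fin (n + 3)))} {k : Fin (n + 3)}
    (hdiss : IsDissection (n + 3) S) (hap : IsApex S k)
    {g : Finset (Fin (n + 3))} (hg : IsDiag (n + 3) g)
    (hcompat : ∀ f ∈ S, ¬ Crosses (n + 3) g f) :
    (∀ v ∈ g, v.val ≤ k.val) ∨ (∀ v ∈ g, k.val ≤ v.val) := by
  obtain ⟨p, q, hpq, rfl⟩ := exists_pair_lt hg.1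
  obtain ⟨hk1, hk2, hk3, hk4⟩ := hap
  have hq := q.isLt; have hp := p.isLt
  rcases le_or_gt q.val k.val with h | h
  · left; intro v hv; rcases mem_pair'.1 hv with rfl | rfl <;> omega
  rcases le_or_gt k.val p.val with h' | h'
  · right; intro v hv; rcases mem_pair'.1 hv with rfl | rfl <;> omega
  exfalso
  by_cases hp0 : p.val = 0
  · by_cases hqn : q.val = n + 2
    · have : IsSide (n + 3) {p, q} := by
        rw [isSide_iff_val (fun hh => by have := congrArg Fin.val hh; omega)]
        right; right; right; exact ⟨hp0, by omega⟩
      exact hg.2 this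
    · have hkS : {k, vlast} ∈ S := by
        rcases hk4 with hh | hh
        · omega
        · exact hh
      refine hcompat _ hkS ?_
      rw [crosses_iff_val hpq (show k.val < (vlast : Fin (n + 3)).val by
        simp only [vlast]; omega)]
      left
      exact ⟨h', h, by simp only [vlast]; omega⟩
  · have hkS : {v0, k} ∈ S := by
      rcases hk3 with hh | hh
      · omega
      · exact hh
    refine hcompat _ hkS ?_
    rw [crosses_iff_val hpq (show (v0 : Fin (n + 3)).val < k.val by simp only [v0]; omega)]
    right
    exact ⟨by simp only [v0]; omega, h', h⟩

end Apex
/-! ### splitting and combining triangulations at the apex -/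

section SplitCombine

variable {n : ℕ}

lemma image_eq_self_of {α : Type} [DecidableEq α] {e : Finset α} {f : α → α}
    (h : ∀ v ∈ e, f v = v) : e.image f = e := by
  rw [Finset.image_congr (g := id) (fun x hx => h x hx), Finset.image_id]

/-- the maximal dissections ("triangulations") of the `N`-gon, as a finset -/
noncomputable def MSet (N : ℕ) : Finset (Finset (Finset (Fin N))) :=
  @Finset.filter _ (fun S => IsDissection N S ∧
    ∀ e, IsDiag N e → (∀ f ∈ S, ¬ Crosses N e f) → e ∈ S) (Classical.decPred _) Finset.univ

lemma mem_MSet {N : ℕ} {S : Finset (Finset (Fin N))} :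
    S ∈ MSet N ↔ IsDissection N S ∧
      (∀ e, IsDiag N e → (∀ f ∈ S, ¬ Crosses N e f) → e ∈ S) := by
  have h := @Finset.mem_filter _ (fun S : Finset (Finset (Fin N)) => IsDissection N S ∧
    ∀ e, IsDiag N e → (∀ f ∈ S, ¬ Crosses N e f) → e ∈ S) (Classical.decPred _) Finset.univ S
  rw [MSet, h]
  simp

def upL (k : ℕ) (hk2 : k ≤ n + 1) : Fin (k + 1) → Fin (n + 3) :=
  upT (show (k + 1) + 0 ≤ n + 3 by omega)

def upR (k : ℕ) (hk2 : k ≤ n + 1) : Fin (n + 3 - k) → Fin (n + 3) :=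
  upT (show (n + 3 - k) + k ≤ n + 3 by omega)

def dnL (k : ℕ) : Fin (n + 3) → Fin (k + 1) := fun v => ⟨min v.val k, by omega⟩

def dnR (k : ℕ) (hk2 : k ≤ n + 1) : Fin (n + 3) → Fin (n + 3 - k) :=
  fun v => ⟨min (v.val - k) (n + 2 - k), by omega⟩

variable (k : ℕ) (hk2 : k ≤ n + 1)

lemma upL_val (v : Fin (k + 1)) : (upL k hk2 v).val = v.val := rfl

lemma upR_val (v : Fin (n + 3 - k)) : (upR k hk2 v).val = v.val + k := rfl

lemma cTL_eq : cT 0 (k + 1) (show (k+1) + 0 ≤ n + 3 by omega) (by omega) =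
    ({⟨0, by omega⟩, ⟨k, by omega⟩} : Finset (Fin (n + 3))) := by
  rw [cT]
  exact pair_eq_pair_iff.2 (Or.inl ⟨rfl, Fin.ext (show 0 + (k + 1) - 1 = k by omega)⟩)

lemma cTR_eq : cT k (n + 3 - k) (show (n+3-k) + k ≤ n + 3 by omega) (by omega) =
    ({⟨k, by omega⟩, ⟨n + 2, by omega⟩} : Finset (Fin (n + 3))) := by
  rw [cT]
  exact pair_eq_pair_iff.2 (Or.inl ⟨rfl, Fin.ext (show k + (n + 3 - k) - 1 = n + 2 by omega)⟩)

lemma dnL_upL (u : Fin (k + 1)) : dnL k (upL k hk2 u) = u := by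
  apply Fin.ext
  have := u.isLt
  simp [dnL, upL_val]
  omega

lemma dnR_upR (u : Fin (n + 3 - k)) : dnR k hk2 (upR k hk2 u) = u := by
  apply Fin.ext
  have := u.isLt
  simp [dnR, upR_val]
  omega

lemma upL_dnL {v : Fin (n + 3)} (hv : v.val ≤ k) : upL k hk2 (dnL k v) = v := by
  apply Fin.ext
  simp [dnL, upL_val]
  omega

lemma upR_dnR {v : Fin (n + 3)} (hv : k ≤ v.val) : upR k hk2 (dnR k hk2 v) = v := by
  apply Fin.ext
  have := v.isLt
  simp [dnR, upR_val]
  omega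

lemma mem_upL_val {e' : Finset (Fin (k + 1))} {v : Fin (n + 3)}
    (hv : v ∈ e'.image (upL k hk2)) : v.val ≤ k := by
  obtain ⟨u, _, rfl⟩ := Finset.mem_image.1 hv
  have := u.isLt
  rw [upL_val]
  omega

lemma mem_upR_val {e' : Finset (Fin (n + 3 - k))} {v : Fin (n + 3)}
    (hv : v ∈ e'.image (upR k hk2)) : k ≤ v.val := by
  obtain ⟨u, _, rfl⟩ := Finset.mem_image.1 hv
  rw [upR_val]
  omega

lemma upL_dnL_image {e : Finset (Fin (n + 3))} (he : ∀ v ∈ e, v.val ≤ k) :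
    (e.image (dnL k)).image (upL k hk2) = e := by
  rw [Finset.image_image]
  exact image_eq_self_of (fun v hv => upL_dnL k hk2 (he v hv))

lemma upR_dnR_image {e : Finset (Fin (n + 3))} (he : ∀ v ∈ e, k ≤ v.val) :
    (e.image (dnR k hk2)).image (upR k hk2) = e := by
  rw [Finset.image_image]
  exact image_eq_self_of (fun v hv => upR_dnR k hk2 (he v hv))

lemma dnL_upL_image (e' : Finset (Fin (k + 1))) :
    (e'.image (upL k hk2)).image (dnL k) = e' := by
  rw [Finset.image_image]
  exact image_eq_self_of (fun v _ => dnL_upL k hk2 v)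

lemma dnR_upR_image (e' : Finset (Fin (n + 3 - k))) :
    (e'.image (upR k hk2)).image (dnR k hk2) = e' := by
  rw [Finset.image_image]
  exact image_eq_self_of (fun v _ => dnR_upR k hk2 v)

end SplitCombine
section SplitCombine2

variable {n : ℕ}

def kF (k : ℕ) (hk2 : k ≤ n + 1) : Fin (n + 3) := ⟨k, by omega⟩

def cL (k : ℕ) (hk2 : k ≤ n + 1) : Finset (Fin (n + 3)) := {v0, kF k hk2}

def cR (k : ℕ) (hk2 : k ≤ n + 1) : Finset (Fin (n + 3)) := {kF k hk2, vlast}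

variable (k : ℕ)

lemma cL_eq_cT (hk2 : k ≤ n + 1) :
    cL k hk2 = cT 0 (k + 1) (show (k+1) + 0 ≤ n + 3 by omega) (by omega) := by
  rw [cTL_eq k hk2]; rfl

lemma cR_eq_cT (hk2 : k ≤ n + 1) :
    cR k hk2 = cT k (n + 3 - k) (show (n+3-k) + k ≤ n + 3 by omega) (by omega) := by
  rw [cTR_eq k hk2]; rfl

def splitL (hk2 : k ≤ n + 1) (S : Finset (Finset (Fin (n + 3)))) :
    Finset (Finset (Fin (k + 1))) :=
  (S.filter (fun e => (∀ v ∈ e, v.val ≤ k) ∧ e ≠ cL k hk2)).image (Finset.image (dnL k))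

def splitR (hk2 : k ≤ n + 1) (S : Finset (Finset (Fin (n + 3)))) :
    Finset (Finset (Fin (n + 3 - k))) :=
  (S.filter (fun e => (∀ v ∈ e, k ≤ v.val) ∧ e ≠ cR k hk2)).image
    (Finset.image (dnR k hk2))

def combine (hk2 : k ≤ n + 1) (P : Finset (Finset (Fin (k + 1))))
    (Q : Finset (Finset (Fin (n + 3 - k)))) : Finset (Finset (Fin (n + 3))) :=
  P.image (Finset.image (upL k hk2)) ∪ Q.image (Finset.image (upR k hk2)) ∪
    (if 1 < k then {cL k hk2} else ∅) ∪ (if k < n + 1 then {cR k hk2} else ∅)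

lemma mem_combine {hk2 : k ≤ n + 1} {P : Finset (Finset (Fin (k + 1)))}
    {Q : Finset (Finset (Fin (n + 3 - k)))} {e : Finset (Fin (n + 3))} :
    e ∈ combine k hk2 P Q ↔
      (∃ e' ∈ P, e = e'.image (upL k hk2)) ∨ (∃ e' ∈ Q, e = e'.image (upR k hk2)) ∨
      (1 < k ∧ e = cL k hk2) ∨ (k < n + 1 ∧ e = cR k hk2) := by
  rw [combine]
  simp only [Finset.mem_union, Finset.mem_image]
  constructor
  · rintro (((⟨a, ha, rfl⟩ | ⟨a, ha, rfl⟩) | hc) | hd)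
    · exact Or.inl ⟨a, ha, rfl⟩
    · exact Or.inr (Or.inl ⟨a, ha, rfl⟩)
    · by_cases h : 1 < k
      · rw [if_pos h, Finset.mem_singleton] at hc
        exact Or.inr (Or.inr (Or.inl ⟨h, hc⟩))
      · rw [if_neg h] at hc
        exact absurd hc (Finset.notMem_empty _)
    · by_cases h : k < n + 1
      · rw [if_pos h, Finset.mem_singleton] at hd
        exact Or.inr (Or.inr (Or.inr ⟨h, hd⟩))
      · rw [if_neg h] at hd
        exact absurd hd (Finset.notMem_empty _)
  · rintro (⟨a, ha, rfl⟩ | ⟨a, ha, rfl⟩ | ⟨h, rfl⟩ | ⟨h, rfl⟩)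
    · exact Or.inl (Or.inl (Or.inl ⟨a, ha, rfl⟩))
    · exact Or.inl (Or.inl (Or.inr ⟨a, ha, rfl⟩))
    · refine Or.inl (Or.inr ?_)
      rw [if_pos h]
      simp
    · refine Or.inr ?_
      rw [if_pos h]
      simp

lemma not_crosses_self {N : ℕ} (e : Finset (Fin N)) : ¬ Crosses N e e := by
  rintro ⟨a, b, c, d, h1, h2, h3, (⟨he, hf⟩ | ⟨he, hf⟩)⟩ <;>
  rw [Fin.lt_def] at h1 h2 h3 <;>
  rcases pair_eq_pair_iff.1 (he.symm.trans hf) with ⟨hx, hy⟩ | ⟨hx, hy⟩ <;>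
  have := congrArg Fin.val hx <;> have := congrArg Fin.val hy <;> omega

lemma not_crosses_cL {hk2 : k ≤ n + 1} {p q : Fin (n + 3)} (hpq : p.val < q.val)
    (hq : q.val ≤ k) : ¬ Crosses (n + 3) {p, q} (cL k hk2) := by
  intro hcr
  rw [cL, crosses_iff_val hpq (show (v0 : Fin (n+3)).val < (kF k hk2).val by
    simp only [v0, kF]; omega)] at hcr
  simp only [v0, kF] at hcr
  omega

lemma not_crosses_cR {hk2 : k ≤ n + 1} {p q : Fin (n + 3)} (hpq : p.val < q.val)
    (hp : k ≤ p.val) : ¬ Crosses (n + 3) {p, q} (cR k hk2) := by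
  intro hcr
  have hq := q.isLt
  rw [cR, crosses_iff_val hpq (show (kF k hk2 : Fin (n+3)).val < (vlast : Fin (n+3)).val by
    simp only [vlast, kF]; omega)] at hcr
  simp only [vlast, kF] at hcr
  omega

lemma cL_not_side (hk1 : 1 ≤ k) (hk2 : k ≤ n + 1) (hk : 1 < k) :
    IsDiag (n + 3) (cL k hk2) := by
  constructor
  · exact Finset.card_pair (fun h => by
      have := congrArg Fin.val h; simp only [v0, kF] at this; omega)
  · intro hs
    rw [cL, isSide_iff_val (fun h => by
      have := congrArg Fin.val h; simp only [v0, kF] at this; omega)] at hs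
    simp only [v0, kF] at hs
    omega

lemma cR_not_side (hk1 : 1 ≤ k) (hk2 : k ≤ n + 1) (hk : k < n + 1) :
    IsDiag (n + 3) (cR k hk2) := by
  constructor
  · exact Finset.card_pair (fun h => by
      have := congrArg Fin.val h; simp only [vlast, kF] at this; omega)
  · intro hs
    rw [cR, isSide_iff_val (fun h => by
      have := congrArg Fin.val h; simp only [vlast, kF] at this; omega)] at hs
    simp only [vlast, kF] at hs
    omega

lemma pair_left_norm {hk2 : k ≤ n + 1} {e : Finset (Fin (n + 3))} (hcard : e.card = 2)
    (he : ∀ v ∈ e, v.val ≤ k) :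
    ∃ a b : Fin (k + 1), a.val < b.val ∧ e = {upL k hk2 a, upL k hk2 b} ∧
      e.image (dnL k) = {a, b} := by
  obtain ⟨p, q, hpq, rfl⟩ := exists_pair_lt hcard
  have hp := he p (by simp); have hq := he q (by simp)
  refine ⟨dnL k p, dnL k q, ?_, ?_, ?_⟩
  · simp only [dnL]; omega
  · rw [upL_dnL k hk2 hp, upL_dnL k hk2 hq]
  · simp

lemma pair_right_norm {hk2 : k ≤ n + 1} {e : Finset (Fin (n + 3))} (hcard : e.card = 2)
    (he : ∀ v ∈ e, k ≤ v.val) :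
    ∃ a b : Fin (n + 3 - k), a.val < b.val ∧ e = {upR k hk2 a, upR k hk2 b} ∧
      e.image (dnR k hk2) = {a, b} := by
  obtain ⟨p, q, hpq, rfl⟩ := exists_pair_lt hcard
  have hp := he p (by simp); have hq := he q (by simp)
  have hp' := p.isLt; have hq' := q.isLt
  refine ⟨dnR k hk2 p, dnR k hk2 q, ?_, ?_, ?_⟩
  · simp only [dnR]; omega
  · rw [upR_dnR k hk2 hp, upR_dnR k hk2 hq]
  · simp

end SplitCombine2
section SplitCombine3

variable {n : ℕ} (k : ℕ)

lemma upL_lt (hk2 : k ≤ n + 1) {a b : Fin (k + 1)} (hab : a.val < b.val) :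
    (upL k hk2 a).val < (upL k hk2 b).val := by
  rw [upL_val, upL_val]; exact hab

lemma upR_lt (hk2 : k ≤ n + 1) {a b : Fin (n + 3 - k)} (hab : a.val < b.val) :
    (upR k hk2 a).val < (upR k hk2 b).val := by
  rw [upR_val, upR_val]; omega

lemma crosses_upL_iff (hk2 : k ≤ n + 1) {a b c d : Fin (k + 1)}
    (hab : a.val < b.val) (hcd : c.val < d.val) :
    Crosses (n + 3) {upL k hk2 a, upL k hk2 b} {upL k hk2 c, upL k hk2 d} ↔
      Crosses (k + 1) {a, b} {c, d} :=
  crosses_upT_iff _ hab hcd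

lemma crosses_upR_iff (hk2 : k ≤ n + 1) {a b c d : Fin (n + 3 - k)}
    (hab : a.val < b.val) (hcd : c.val < d.val) :
    Crosses (n + 3) {upR k hk2 a, upR k hk2 b} {upR k hk2 c, upR k hk2 d} ↔
      Crosses (n + 3 - k) {a, b} {c, d} :=
  crosses_upT_iff _ hab hcd

lemma diag_upL_iff (hk2 : k ≤ n + 1) {a b : Fin (k + 1)} (hab : a.val < b.val) :
    (IsDiag (n + 3) {upL k hk2 a, upL k hk2 b} ∧
      ({upL k hk2 a, upL k hk2 b} : Finset (Fin (n + 3))) ≠ cL k hk2) ↔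
      IsDiag (k + 1) {a, b} := by
  rw [cL_eq_cT k hk2]
  exact diag_upT_iff _ (by omega) hab

lemma diag_upR_iff (hk1 : 1 ≤ k) (hk2 : k ≤ n + 1) {a b : Fin (n + 3 - k)}
    (hab : a.val < b.val) :
    (IsDiag (n + 3) {upR k hk2 a, upR k hk2 b} ∧
      ({upR k hk2 a, upR k hk2 b} : Finset (Fin (n + 3))) ≠ cR k hk2) ↔
      IsDiag (n + 3 - k) {a, b} := by
  rw [cR_eq_cT k hk2]
  exact diag_upT_iff _ (by omega) hab

lemma pair_upL_le (hk2 : k ≤ n + 1) {a b : Fin (k + 1)} :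
    ∀ v ∈ ({upL k hk2 a, upL k hk2 b} : Finset (Fin (n + 3))), v.val ≤ k := by
  intro v hv
  rcases mem_pair'.1 hv with rfl | rfl <;> (rw [upL_val]; omega)

lemma pair_upR_ge (hk2 : k ≤ n + 1) {a b : Fin (n + 3 - k)} :
    ∀ v ∈ ({upR k hk2 a, upR k hk2 b} : Finset (Fin (n + 3))), k ≤ v.val := by
  intro v hv
  rcases mem_pair'.1 hv with rfl | rfl <;> (rw [upR_val]; omega)

lemma dn_pair_upL (hk2 : k ≤ n + 1) (a b : Fin (k + 1)) :
    ({upL k hk2 a, upL k hk2 b} : Finset (Fin (n + 3))).image (dnL k) = {a, b} := by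
  have : ({upL k hk2 a, upL k hk2 b} : Finset (Fin (n + 3))).image (dnL k) =
      {dnL k (upL k hk2 a), dnL k (upL k hk2 b)} := by simp
  rw [this, dnL_upL k hk2, dnL_upL k hk2]

lemma dn_pair_upR (hk2 : k ≤ n + 1) (a b : Fin (n + 3 - k)) :
    ({upR k hk2 a, upR k hk2 b} : Finset (Fin (n + 3))).image (dnR k hk2) = {a, b} := by
  have : ({upR k hk2 a, upR k hk2 b} : Finset (Fin (n + 3))).image (dnR k hk2) =
      {dnR k hk2 (upR k hk2 a), dnR k hk2 (upR k hk2 b)} := by simp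
  rw [this, dnR_upR k hk2, dnR_upR k hk2]

lemma splitL_mem (hk1 : 1 ≤ k) (hk2 : k ≤ n + 1)
    {S : Finset (Finset (Fin (n + 3)))} (hS : S ∈ MSet (n + 3))
    (hap : IsApex S (kF k hk2)) : splitL k hk2 S ∈ MSet (k + 1) := by
  obtain ⟨⟨hd, hnc⟩, hmax⟩ := mem_MSet.1 hS
  have hsplit : ∀ f ∈ S, (∀ v ∈ f, v.val ≤ k) ∨ (∀ v ∈ f, k ≤ v.val) := by
    intro f hf
    exact compat_split ⟨hd, hnc⟩ hap (hd f hf) (fun f' hf' => hnc f hf f' hf')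
  have hmemL : ∀ e'' ∈ splitL k hk2 S, ∃ a b : Fin (k + 1), a.val < b.val ∧
      e'' = {a, b} ∧ ({upL k hk2 a, upL k hk2 b} : Finset (Fin (n + 3))) ∈ S ∧
      ({upL k hk2 a, upL k hk2 b} : Finset (Fin (n + 3))) ≠ cL k hk2 := by
    intro e'' he''
    obtain ⟨e, he, rfl⟩ := Finset.mem_image.1 he''
    rw [Finset.mem_filter] at he
    obtain ⟨heS, hle, hne⟩ := he
    obtain ⟨a, b, hab, hepair, himg⟩ := pair_left_norm k (hd e heS).1 hle
    exact ⟨a, b, hab, himg, hepair ▸ heS, hepair ▸ hne⟩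
  rw [mem_MSet]
  refine ⟨⟨?_, ?_⟩, ?_⟩
  · intro e'' he''
    obtain ⟨a, b, hab, rfl, hmemS, hnecL⟩ := hmemL e'' he''
    exact (diag_upL_iff k hk2 hab).1 ⟨hd _ hmemS, hnecL⟩
  · intro e'' he'' f'' hf'' hcr
    obtain ⟨a, b, hab, rfl, hms, hne⟩ := hmemL _ he''
    obtain ⟨c, d, hcd, rfl, hms', hne'⟩ := hmemL _ hf''
    exact hnc _ hms _ hms' ((crosses_upL_iff k hk2 hab hcd).2 hcr)
  · intro g' hg' hcompat'
    obtain ⟨a, b, hab, rfl⟩ := exists_pair_lt hg'.1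
    have hgdiag := (diag_upL_iff k hk2 hab).2 hg'
    have hcompatN : ∀ f ∈ S, ¬ Crosses (n + 3) {upL k hk2 a, upL k hk2 b} f := by
      intro f hf hcr
      rcases hsplit f hf with hfL | hfR
      · by_cases hfc : f = cL k hk2
        · subst hfc
          exact not_crosses_cL k (upL_lt k hk2 hab)
            (by rw [upL_val]; omega) hcr
        · obtain ⟨c, d, hcd, hfpair, hfimg⟩ := pair_left_norm k (hd f hf).1 hfL
          have hmemsplit : ({c, d} : Finset (Fin (k + 1))) ∈ splitL k hk2 S := by
            rw [splitL]
            exact Finset.mem_image.2 ⟨f, Finset.mem_filter.2 ⟨hf, hfL, hfc⟩, hfimg⟩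
          refine hcompat' _ hmemsplit ?_
          apply (crosses_upL_iff k hk2 hab hcd).1
          rw [← hfpair]
          exact hcr
      · exact sep_no_cross (pair_upL_le k hk2) hfR hcr
    have hgS := hmax _ hgdiag.1 hcompatN
    rw [splitL]
    exact Finset.mem_image.2 ⟨_, Finset.mem_filter.2 ⟨hgS, pair_upL_le k hk2, hgdiag.2⟩,
      dn_pair_upL k hk2 a b⟩

lemma splitR_mem (hk1 : 1 ≤ k) (hk2 : k ≤ n + 1)
    {S : Finset (Finset (Fin (n + 3)))} (hS : S ∈ MSet (n + 3))
    (hap : IsApex S (kF k hk2)) : splitR k hk2 S ∈ MSet (n + 3 - k) := by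
  obtain ⟨⟨hd, hnc⟩, hmax⟩ := mem_MSet.1 hS
  have hsplit : ∀ f ∈ S, (∀ v ∈ f, v.val ≤ k) ∨ (∀ v ∈ f, k ≤ v.val) := by
    intro f hf
    exact compat_split ⟨hd, hnc⟩ hap (hd f hf) (fun f' hf' => hnc f hf f' hf')
  have hmemR : ∀ e'' ∈ splitR k hk2 S, ∃ a b : Fin (n + 3 - k), a.val < b.val ∧
      e'' = {a, b} ∧ ({upR k hk2 a, upR k hk2 b} : Finset (Fin (n + 3))) ∈ S ∧
      ({upR k hk2 a, upR k hk2 b} : Finset (Fin (n + 3))) ≠ cR k hk2 := by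
    intro e'' he''
    obtain ⟨e, he, rfl⟩ := Finset.mem_image.1 he''
    rw [Finset.mem_filter] at he
    obtain ⟨heS, hle, hne⟩ := he
    obtain ⟨a, b, hab, hepair, himg⟩ := pair_right_norm k (hd e heS).1 hle
    exact ⟨a, b, hab, himg, hepair ▸ heS, hepair ▸ hne⟩
  rw [mem_MSet]
  refine ⟨⟨?_, ?_⟩, ?_⟩
  · intro e'' he''
    obtain ⟨a, b, hab, rfl, hmemS, hnecR⟩ := hmemR e'' he''
    exact (diag_upR_iff k hk1 hk2 hab).1 ⟨hd _ hmemS, hnecR⟩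
  · intro e'' he'' f'' hf'' hcr
    obtain ⟨a, b, hab, rfl, hms, hne⟩ := hmemR _ he''
    obtain ⟨c, d, hcd, rfl, hms', hne'⟩ := hmemR _ hf''
    exact hnc _ hms _ hms' ((crosses_upR_iff k hk2 hab hcd).2 hcr)
  · intro g' hg' hcompat'
    obtain ⟨a, b, hab, rfl⟩ := exists_pair_lt hg'.1
    have hgdiag := (diag_upR_iff k hk1 hk2 hab).2 hg'
    have hcompatN : ∀ f ∈ S, ¬ Crosses (n + 3) {upR k hk2 a, upR k hk2 b} f := by
      intro f hf hcr
      rcases hsplit f hf with hfL | hfR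
      · exact sep_no_cross hfL (pair_upR_ge k hk2) (crosses_symm hcr)
      · by_cases hfc : f = cR k hk2
        · subst hfc
          exact not_crosses_cR k (upR_lt k hk2 hab)
            (by rw [upR_val]; omega) hcr
        · obtain ⟨c, d, hcd, hfpair, hfimg⟩ := pair_right_norm k (hd f hf).1 hfR
          have hmemsplit : ({c, d} : Finset (Fin (n + 3 - k))) ∈ splitR k hk2 S := by
            rw [splitR]
            exact Finset.mem_image.2 ⟨f, Finset.mem_filter.2 ⟨hf, hfR, hfc⟩, hfimg⟩
          refine hcompat' _ hmemsplit ?_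
          apply (crosses_upR_iff k hk2 hab hcd).1
          rw [← hfpair]
          exact hcr
    have hgS := hmax _ hgdiag.1 hcompatN
    rw [splitR]
    exact Finset.mem_image.2 ⟨_, Finset.mem_filter.2 ⟨hgS, pair_upR_ge k hk2, hgdiag.2⟩,
      dn_pair_upR k hk2 a b⟩

end SplitCombine3
section SplitCombine4

variable {n : ℕ} (k : ℕ)

lemma cL_le (hk2 : k ≤ n + 1) : ∀ v ∈ cL k hk2, v.val ≤ k := by
  intro v hv
  rw [cL] at hv
  rcases mem_pair'.1 hv with rfl | rfl <;> simp only [v0, kF] <;> omega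

lemma cR_ge (hk2 : k ≤ n + 1) : ∀ v ∈ cR k hk2, k ≤ v.val := by
  intro v hv
  rw [cR] at hv
  rcases mem_pair'.1 hv with rfl | rfl <;> simp only [vlast, kF] <;> omega

lemma cL_side_of_k1 (hk2 : k ≤ n + 1) (h : k = 1) : IsSide (n + 3) (cL k hk2) := by
  rw [cL, isSide_iff_val (fun hh => by
    have := congrArg Fin.val hh; simp only [v0, kF] at this; omega)]
  simp only [v0, kF]
  omega

lemma cR_side_of_kn1 (hk2 : k ≤ n + 1) (h : k = n + 1) : IsSide (n + 3) (cR k hk2) := by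
  rw [cR, isSide_iff_val (fun hh => by
    have := congrArg Fin.val hh; simp only [vlast, kF] at this; omega)]
  simp only [vlast, kF]
  omega

lemma combine_mem (hk1 : 1 ≤ k) (hk2 : k ≤ n + 1)
    {P : Finset (Finset (Fin (k + 1)))} {Q : Finset (Finset (Fin (n + 3 - k)))}
    (hP : P ∈ MSet (k + 1)) (hQ : Q ∈ MSet (n + 3 - k)) :
    combine k hk2 P Q ∈ MSet (n + 3) ∧ IsApex (combine k hk2 P Q) (kF k hk2) := by
  obtain ⟨⟨hPd, hPnc⟩, hPmax⟩ := mem_MSet.1 hP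
  obtain ⟨⟨hQd, hQnc⟩, hQmax⟩ := mem_MSet.1 hQ
  have hclass : ∀ e ∈ combine k hk2 P Q,
      (∃ a b : Fin (k + 1), a.val < b.val ∧ {a, b} ∈ P ∧
        e = {upL k hk2 a, upL k hk2 b}) ∨
      (∃ a b : Fin (n + 3 - k), a.val < b.val ∧ {a, b} ∈ Q ∧
        e = {upR k hk2 a, upR k hk2 b}) ∨
      (1 < k ∧ e = cL k hk2) ∨ (k < n + 1 ∧ e = cR k hk2) := by
    intro e he
    rcases (mem_combine k).1 he with ⟨e', he', rfl⟩ | ⟨e', he', rfl⟩ | h | h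
    · obtain ⟨a, b, hab, rfl⟩ := exists_pair_lt (hPd e' he').1
      exact Or.inl ⟨a, b, hab, he', by simp⟩
    · obtain ⟨a, b, hab, rfl⟩ := exists_pair_lt (hQd e' he').1
      exact Or.inr (Or.inl ⟨a, b, hab, he', by simp⟩)
    · exact Or.inr (Or.inr (Or.inl h))
    · exact Or.inr (Or.inr (Or.inr h))
  have hdiag : ∀ e ∈ combine k hk2 P Q, IsDiag (n + 3) e := by
    intro e he
    rcases hclass e he with ⟨a, b, hab, haP, rfl⟩ | ⟨a, b, hab, haQ, rfl⟩ |
      ⟨hk, rfl⟩ | ⟨hk, rfl⟩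
    · exact ((diag_upL_iff k hk2 hab).2 (hPd _ haP)).1
    · exact ((diag_upR_iff k hk1 hk2 hab).2 (hQd _ haQ)).1
    · exact cL_not_side k hk1 hk2 hk
    · exact cR_not_side k hk1 hk2 hk
  have hnc2 : ∀ e ∈ combine k hk2 P Q, ∀ f ∈ combine k hk2 P Q,
      ¬ Crosses (n + 3) e f := by
    intro e he f hf
    rcases hclass e he with ⟨a, b, hab, haP, rfl⟩ | ⟨a, b, hab, haQ, rfl⟩ |
      ⟨hk, rfl⟩ | ⟨hk, rfl⟩ <;>
    rcases hclass f hf with ⟨c, d, hcd, hcP, rfl⟩ | ⟨c, d, hcd, hcQ, rfl⟩ |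
      ⟨hk', rfl⟩ | ⟨hk', rfl⟩
    · exact fun hcr => hPnc _ haP _ hcP ((crosses_upL_iff k hk2 hab hcd).1 hcr)
    · exact sep_no_cross (pair_upL_le k hk2) (pair_upR_ge k hk2)
    · exact not_crosses_cL k (upL_lt k hk2 hab) (by rw [upL_val]; omega)
    · exact sep_no_cross (pair_upL_le k hk2) (cR_ge k hk2)
    · exact fun hcr => sep_no_cross (pair_upL_le k hk2) (pair_upR_ge k hk2)
        (crosses_symm hcr)
    · exact fun hcr => hQnc _ haQ _ hcQ ((crosses_upR_iff k hk2 hab hcd).1 hcr)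
    · exact fun hcr => sep_no_cross (cL_le k hk2) (pair_upR_ge k hk2) (crosses_symm hcr)
    · exact not_crosses_cR k (upR_lt k hk2 hab) (by rw [upR_val]; omega)
    · exact fun hcr => not_crosses_cL k (upL_lt k hk2 hcd)
        (by rw [upL_val]; omega) (crosses_symm hcr)
    · exact sep_no_cross (cL_le k hk2) (pair_upR_ge k hk2)
    · exact not_crosses_self _
    · exact sep_no_cross (cL_le k hk2) (cR_ge k hk2)
    · exact fun hcr => sep_no_cross (pair_upL_le k hk2) (cR_ge k hk2) (crosses_symm hcr)
    · exact fun hcr => not_crosses_cR k (upR_lt k hk2 hcd)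
        (by rw [upR_val]; omega) (crosses_symm hcr)
    · exact fun hcr => sep_no_cross (cL_le k hk2) (cR_ge k hk2) (crosses_symm hcr)
    · exact not_crosses_self _
  have hap : IsApex (combine k hk2 P Q) (kF k hk2) := by
    refine ⟨hk1, hk2, ?_, ?_⟩
    · by_cases h : k = 1
      · exact Or.inl h
      · exact Or.inr ((mem_combine k).2 (Or.inr (Or.inr (Or.inl ⟨by omega, rfl⟩))))
    · by_cases h : k = n + 1
      · exact Or.inl h
      · exact Or.inr ((mem_combine k).2 (Or.inr (Or.inr (Or.inr ⟨by omega, rfl⟩))))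
  refine ⟨mem_MSet.2 ⟨⟨hdiag, hnc2⟩, ?_⟩, hap⟩
  intro g hg hcompat
  rcases compat_split ⟨hdiag, hnc2⟩ hap hg hcompat with hgL | hgR
  · by_cases hgc : g = cL k hk2
    · subst hgc
      have hk : 1 < k := by
        rcases Nat.lt_or_ge 1 k with h | h
        · exact h
        · exact absurd (cL_side_of_k1 k hk2 (by omega)) hg.2
      exact (mem_combine k).2 (Or.inr (Or.inr (Or.inl ⟨hk, rfl⟩)))
    · obtain ⟨a, b, hab, hgpair, hgimg⟩ := pair_left_norm k (hk2 := hk2) hg.1 hgL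
      subst hgpair
      have hdiag' := (diag_upL_iff k hk2 hab).1 ⟨hg, hgc⟩
      have hmem : ({a, b} : Finset (Fin (k + 1))) ∈ P := by
        refine hPmax _ hdiag' ?_
        intro f' hf' hcr'
        obtain ⟨c, d, hcd, rfl⟩ := exists_pair_lt (hPd f' hf').1
        have hmem2 : ({upL k hk2 c, upL k hk2 d} : Finset (Fin (n + 3))) ∈
            combine k hk2 P Q := (mem_combine k).2 (Or.inl ⟨{c, d}, hf', by simp⟩)
        exact hcompat _ hmem2 ((crosses_upL_iff k hk2 hab hcd).2 hcr')
      exact (mem_combine k).2 (Or.inl ⟨{a, b}, hmem, by simp⟩)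
  · by_cases hgc : g = cR k hk2
    · subst hgc
      have hk : k < n + 1 := by
        rcases Nat.lt_or_ge k (n + 1) with h | h
        · exact h
        · exact absurd (cR_side_of_kn1 k hk2 (by omega)) hg.2
      exact (mem_combine k).2 (Or.inr (Or.inr (Or.inr ⟨hk, rfl⟩)))
    · obtain ⟨a, b, hab, hgpair, hgimg⟩ := pair_right_norm k (hk2 := hk2) hg.1 hgR
      subst hgpair
      have hdiag' := (diag_upR_iff k hk1 hk2 hab).1 ⟨hg, hgc⟩
      have hmem : ({a, b} : Finset (Fin (n + 3 - k))) ∈ Q := by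
        refine hQmax _ hdiag' ?_
        intro f' hf' hcr'
        obtain ⟨c, d, hcd, rfl⟩ := exists_pair_lt (hQd f' hf').1
        have hmem2 : ({upR k hk2 c, upR k hk2 d} : Finset (Fin (n + 3))) ∈
            combine k hk2 P Q := (mem_combine k).2 (Or.inr (Or.inl ⟨{c, d}, hf', by simp⟩))
        exact hcompat _ hmem2 ((crosses_upR_iff k hk2 hab hcd).2 hcr')
      exact (mem_combine k).2 (Or.inr (Or.inl ⟨{a, b}, hmem, by simp⟩))

lemma combine_split (hk1 : 1 ≤ k) (hk2 : k ≤ n + 1)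
    {S : Finset (Finset (Fin (n + 3)))} (hS : S ∈ MSet (n + 3))
    (hap : IsApex S (kF k hk2)) :
    combine k hk2 (splitL k hk2 S) (splitR k hk2 S) = S := by
  obtain ⟨⟨hd, hnc⟩, hmax⟩ := mem_MSet.1 hS
  have hsplit : ∀ f ∈ S, (∀ v ∈ f, v.val ≤ k) ∨ (∀ v ∈ f, k ≤ v.val) :=
    fun f hf => compat_split ⟨hd, hnc⟩ hap (hd f hf) (fun f' hf' => hnc f hf f' hf')
  apply Finset.ext
  intro e
  constructor
  · intro he
    rcases (mem_combine k).1 he with ⟨e', he', rfl⟩ | ⟨e', he', rfl⟩ |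
      ⟨hk, rfl⟩ | ⟨hk, rfl⟩
    · rw [splitL] at he'
      obtain ⟨f, hf, rfl⟩ := Finset.mem_image.1 he'
      rw [Finset.mem_filter] at hf
      rw [upL_dnL_image k hk2 hf.2.1]
      exact hf.1
    · rw [splitR] at he'
      obtain ⟨f, hf, rfl⟩ := Finset.mem_image.1 he'
      rw [Finset.mem_filter] at hf
      rw [upR_dnR_image k hk2 hf.2.1]
      exact hf.1
    · rcases hap.2.2.1 with h | h
      · simp only [kF] at h; omega
      · exact h
    · rcases hap.2.2.2 with h | h
      · simp only [kF] at h; omega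
      · exact h
  · intro he
    rcases hsplit e he with hL | hR
    · by_cases hec : e = cL k hk2
      · subst hec
        have hk : 1 < k := by
          rcases Nat.lt_or_ge 1 k with h | h
          · exact h
          · exact absurd (cL_side_of_k1 k hk2 (by omega)) (hd _ he).2
        exact (mem_combine k).2 (Or.inr (Or.inr (Or.inl ⟨hk, rfl⟩)))
      · refine (mem_combine k).2 (Or.inl ⟨e.image (dnL k), ?_,
          (upL_dnL_image k hk2 hL).symm⟩)
        rw [splitL]
        exact Finset.mem_image.2 ⟨e, Finset.mem_filter.2 ⟨he, hL, hec⟩, rfl⟩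
    · by_cases hec : e = cR k hk2
      · subst hec
        have hk : k < n + 1 := by
          rcases Nat.lt_or_ge k (n + 1) with h | h
          · exact h
          · exact absurd (cR_side_of_kn1 k hk2 (by omega)) (hd _ he).2
        exact (mem_combine k).2 (Or.inr (Or.inr (Or.inr ⟨hk, rfl⟩)))
      · refine (mem_combine k).2 (Or.inr (Or.inl ⟨e.image (dnR k hk2), ?_,
          (upR_dnR_image k hk2 hR).symm⟩))
        rw [splitR]
        exact Finset.mem_image.2 ⟨e, Finset.mem_filter.2 ⟨he, hR, hec⟩, rfl⟩

lemma splitL_combine (hk1 : 1 ≤ k) (hk2 : k ≤ n + 1)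
    {P : Finset (Finset (Fin (k + 1)))} {Q : Finset (Finset (Fin (n + 3 - k)))}
    (hP : P ∈ MSet (k + 1)) (hQ : Q ∈ MSet (n + 3 - k)) :
    splitL k hk2 (combine k hk2 P Q) = P := by
  obtain ⟨⟨hPd, hPnc⟩, _⟩ := mem_MSet.1 hP
  obtain ⟨⟨hQd, hQnc⟩, _⟩ := mem_MSet.1 hQ
  apply Finset.ext
  intro e'
  constructor
  · intro he'
    rw [splitL] at he'
    obtain ⟨f, hf, rfl⟩ := Finset.mem_image.1 he'
    rw [Finset.mem_filter] at hf
    obtain ⟨hfc, hfle, hfne⟩ := hf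
    rcases (mem_combine k).1 hfc with ⟨g, hg, rfl⟩ | ⟨g, hg, rfl⟩ |
      ⟨hk, rfl⟩ | ⟨hk, rfl⟩
    · rw [dnL_upL_image]
      exact hg
    · exfalso
      obtain ⟨c, d, hcd, rfl⟩ := exists_pair_lt (hQd g hg).1
      have := hfle (upR k hk2 d) (by simp)
      rw [upR_val] at this
      omega
    · exact absurd rfl hfne
    · exfalso
      have := hfle vlast (by rw [cR]; simp)
      simp only [vlast] at this
      omega
  · intro he'
    obtain ⟨a, b, hab, rfl⟩ := exists_pair_lt (hPd e' he').1
    have hne := ((diag_upL_iff k hk2 hab).2 (hPd _ he')).2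
    rw [splitL]
    refine Finset.mem_image.2 ⟨{upL k hk2 a, upL k hk2 b},
      Finset.mem_filter.2 ⟨?_, pair_upL_le k hk2, hne⟩, dn_pair_upL k hk2 a b⟩
    exact (mem_combine k).2 (Or.inl ⟨{a, b}, he', by simp⟩)

lemma splitR_combine (hk1 : 1 ≤ k) (hk2 : k ≤ n + 1)
    {P : Finset (Finset (Fin (k + 1)))} {Q : Finset (Finset (Fin (n + 3 - k)))}
    (hP : P ∈ MSet (k + 1)) (hQ : Q ∈ MSet (n + 3 - k)) :
    splitR k hk2 (combine k hk2 P Q) = Q := by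
  obtain ⟨⟨hPd, hPnc⟩, _⟩ := mem_MSet.1 hP
  obtain ⟨⟨hQd, hQnc⟩, _⟩ := mem_MSet.1 hQ
  apply Finset.ext
  intro e'
  constructor
  · intro he'
    rw [splitR] at he'
    obtain ⟨f, hf, rfl⟩ := Finset.mem_image.1 he'
    rw [Finset.mem_filter] at hf
    obtain ⟨hfc, hfge, hfne⟩ := hf
    rcases (mem_combine k).1 hfc with ⟨g, hg, rfl⟩ | ⟨g, hg, rfl⟩ |
      ⟨hk, rfl⟩ | ⟨hk, rfl⟩
    · exfalso
      obtain ⟨c, d, hcd, rfl⟩ := exists_pair_lt (hPd g hg).1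
      have h1 := hfge (upL k hk2 c) (by simp)
      have h2 := hfge (upL k hk2 d) (by simp)
      rw [upL_val] at h1 h2
      have := c.isLt; have := d.isLt
      omega
    · rw [dnR_upR_image]
      exact hg
    · exfalso
      have := hfge v0 (by rw [cL]; simp)
      simp only [v0] at this
      omega
    · exact absurd rfl hfne
  · intro he'
    obtain ⟨a, b, hab, rfl⟩ := exists_pair_lt (hQd e' he').1
    have hne := ((diag_upR_iff k hk1 hk2 hab).2 (hQd _ he')).2
    rw [splitR]
    refine Finset.mem_image.2 ⟨{upR k hk2 a, upR k hk2 b},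
      Finset.mem_filter.2 ⟨?_, pair_upR_ge k hk2, hne⟩, dn_pair_upR k hk2 a b⟩
    exact (mem_combine k).2 (Or.inr (Or.inl ⟨{a, b}, he', by simp⟩))

end SplitCombine4
/-! ### counting -/

lemma no_diag_two (e : Finset (Fin 2)) : ¬ IsDiag 2 e := by
  rintro ⟨hcard, hns⟩
  obtain ⟨p, q, hpq, rfl⟩ := exists_pair_lt hcard
  apply hns
  have hp := p.isLt; have hq := q.isLt
  rw [isSide_iff_val (fun h => by have := congrArg Fin.val h; omega)]
  omega

lemma MSet_two : MSet 2 = {∅} := by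
  apply Finset.ext
  intro S
  rw [mem_MSet, Finset.mem_singleton]
  constructor
  · rintro ⟨⟨hd, _⟩, _⟩
    exact Finset.eq_empty_iff_forall_notMem.2 (fun e he => no_diag_two e (hd e he))
  · rintro rfl
    refine ⟨⟨fun e he => absurd he (Finset.notMem_empty _), fun e he => absurd he
      (Finset.notMem_empty _)⟩, fun e hdg _ => absurd hdg (no_diag_two e)⟩

lemma MSet_card_rec (n : ℕ) : (MSet (n + 3)).card =
    ∑ i ∈ Finset.range (n + 1), (MSet (i + 2)).card * (MSet (n - i + 2)).card := by
  classical
  set φ : Finset (Finset (Fin (n + 3))) → ℕ := fun S =>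
    if h : ∃ kf : Fin (n + 3), IsApex S kf then (Classical.choose h).val - 1 else 0 with hφ
  have hφspec : ∀ S ∈ MSet (n + 3), ∃ K : Fin (n + 3), IsApex S K ∧ φ S = K.val - 1 := by
    intro S hS
    obtain ⟨hd, hmax⟩ := mem_MSet.1 hS
    have h : ∃ kf : Fin (n + 3), IsApex S kf := apex_exists hd hmax
    exact ⟨Classical.choose h, Classical.choose_spec h, by rw [hφ]; simp only [dif_pos h]⟩
  have hmemrange : ∀ S ∈ MSet (n + 3), φ S ∈ Finset.range (n + 1) := by
    intro S hS
    obtain ⟨K, hK, hKeq⟩ := hφspec S hS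
    rw [Finset.mem_range, hKeq]
    have := hK.1; have := hK.2.1
    omega
  rw [Finset.card_eq_sum_card_fiberwise hmemrange]
  apply Finset.sum_congr rfl
  intro i hi
  rw [Finset.mem_range] at hi
  have hk1 : 1 ≤ i + 1 := by omega
  have hk2 : i + 1 ≤ n + 1 := by omega
  have hfib : ∀ S ∈ MSet (n + 3), (φ S = i ↔ IsApex S (kF (i + 1) hk2)) := by
    intro S hS
    obtain ⟨K, hK, hKeq⟩ := hφspec S hS
    obtain ⟨hd, hmax⟩ := mem_MSet.1 hS
    constructor
    · intro h
      have hKval : K.val = i + 1 := by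
        have := hK.1
        omega
      have : K = kF (i + 1) hk2 := Fin.ext (by rw [hKval]; rfl)
      exact this ▸ hK
    · intro h
      have : K = kF (i + 1) hk2 := apex_unique hd hK h
      rw [hKeq, this]
      simp only [kF]
      omega
  have hcard : ((MSet (n + 3)).filter (fun S => φ S = i)).card =
      ((MSet (i + 2)) ×ˢ (MSet (n + 3 - (i + 1)))).card := by
    apply Finset.card_bij' (i := fun S _ => (splitL (i + 1) hk2 S, splitR (i + 1) hk2 S))
      (j := fun PQ _ => combine (i + 1) hk2 PQ.1 PQ.2)
    · intro S hS
      rw [Finset.mem_filter] at hS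
      have hap := (hfib S hS.1).1 hS.2
      rw [Finset.mem_product]
      exact ⟨splitL_mem (i + 1) hk1 hk2 hS.1 hap, splitR_mem (i + 1) hk1 hk2 hS.1 hap⟩
    · intro PQ hPQ
      rw [Finset.mem_product] at hPQ
      obtain ⟨hcm, hap⟩ := combine_mem (i + 1) hk1 hk2 hPQ.1 hPQ.2
      rw [Finset.mem_filter]
      exact ⟨hcm, (hfib _ hcm).2 hap⟩
    · intro S hS
      rw [Finset.mem_filter] at hS
      exact combine_split (i + 1) hk1 hk2 hS.1 ((hfib S hS.1).1 hS.2)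
    · intro PQ hPQ
      rw [Finset.mem_product] at hPQ
      exact Prod.ext (splitL_combine (i + 1) hk1 hk2 hPQ.1 hPQ.2)
        (splitR_combine (i + 1) hk1 hk2 hPQ.1 hPQ.2)
  rw [hcard, Finset.card_product]
  have hsz : n + 3 - (i + 1) = n - i + 2 := by omega
  rw [hsz]

lemma MSet_card_eq : ∀ m : ℕ, (MSet (m + 2)).card = catalan m := by
  intro m
  induction m using Nat.strong_induction_on with
  | _ m ih =>
    match m with
    | 0 => rw [MSet_two, catalan_zero, Finset.card_singleton]
    | Nat.succ m' =>
      rw [show m' + 1 + 2 = m' + 3 from rfl, MSet_card_rec m', catalan_succ m',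
        Fin.sum_univ_eq_sum_range (fun i => catalan i * catalan (m' - i)) (m' + 1)]
      apply Finset.sum_congr rfl
      intro i hi
      rw [Finset.mem_range] at hi
      rw [ih i (by omega), ih (m' - i) (by omega)]
/-! ### main theorem -/

/-- The number of triangulations of a convex `(n+2)`-gon by non-crossing diagonals
is the Catalan number `C n = (1/(n+1)) * choose (2n) n`. -/
theorem count_triangulations (n : ℕ) :
    {S : Finset (Finset (Fin (n + 2))) | IsDissection (n + 2) S ∧
        ∀ c : Finset (Fin (n + 2)), IsCell (n + 2) S c → c.card = 3}.ncard = catalan n ∧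
    (n + 1) * {S : Finset (Finset (Fin (n + 2))) | IsDissection (n + 2) S ∧
        ∀ c : Finset (Fin (n + 2)), IsCell (n + 2) S c → c.card = 3}.ncard
      = (2 * n).choose n := by
  have hseteq : {S : Finset (Finset (Fin (n + 2))) | IsDissection (n + 2) S ∧
      ∀ c : Finset (Fin (n + 2)), IsCell (n + 2) S c → c.card = 3} =
      ↑(MSet (n + 2)) := by
    ext S
    simp only [Set.mem_setOf_eq, Finset.mem_coe, mem_MSet]
    constructor
    · rintro ⟨hd, htri⟩
      exact ⟨hd, triangles_imp_max hd htri⟩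
    · rintro ⟨hd, hmax⟩
      exact ⟨hd, max_imp_triangles hd hmax⟩
  have hcard : {S : Finset (Finset (Fin (n + 2))) | IsDissection (n + 2) S ∧
      ∀ c : Finset (Fin (n + 2)), IsCell (n + 2) S c → c.card = 3}.ncard = catalan n := by
    rw [hseteq, Set.ncard_coe_finset, MSet_card_eq n]
  refine ⟨hcard, ?_⟩
  rw [hcard, succ_mul_catalan_eq_centralBinom]
  rfl

end PolygonDissection
end

section
/- Lagrange inversion: let φ(y) be a formal power series with nonzero constant term, and let y(z) be the formal power series with y(0) = 0 satisfying y(z) = z·φ(y(z)). Then for every n ≥ 1, n·[z^n] y(z) = [y^{n-1}] φ(y)^n. -/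
open PowerSeries

/-- Composition `f(y)` of formal power series, meaningful when the constant
coefficient of `y` vanishes (then `coeff n (y^k) = 0` for `k > n`). -/
noncomputable def psComp {R : Type*} [CommRing R] (f y : PowerSeries R) :
    PowerSeries R :=
  PowerSeries.mk fun n =>
    ∑ k ∈ Finset.range (n + 1), PowerSeries.coeff k f * PowerSeries.coeff n (y ^ k)

section Aux

variable {R : Type*} [CommRing R]

lemma coeff_psComp (f y : PowerSeries R) (n : ℕ) :
    coeff n (psComp f y) =
      ∑ k ∈ Finset.range (n + 1), coeff k f * coeff n (y ^ k) := by
  simp [psComp]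

lemma coeff_pow_of_lt {y : PowerSeries R} (hy0 : constantCoeff y = 0)
    {n k : ℕ} (h : n < k) : coeff n (y ^ k) = 0 := by
  have hd : (X : PowerSeries R) ^ k ∣ y ^ k :=
    pow_dvd_pow_of_dvd (X_dvd_iff.mpr hy0) k
  exact X_pow_dvd_iff.mp hd n h

lemma coeff_mul_congr {f f' g g' : PowerSeries R} {n : ℕ}
    (hf : ∀ j ≤ n, coeff j f = coeff j f')
    (hg : ∀ j ≤ n, coeff j g = coeff j g') :
    coeff n (f * g) = coeff n (f' * g') := by
  rw [coeff_mul, coeff_mul]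
  refine Finset.sum_congr rfl fun p hp => ?_
  have hpn := Finset.HasAntidiagonal.mem_antidiagonal.mp hp
  rw [hf p.1 (by omega), hg p.2 (by omega)]

lemma coeff_pow_congr {y y' : PowerSeries R} {n : ℕ}
    (h : ∀ j ≤ n, coeff j y = coeff j y') (k : ℕ) :
    ∀ j ≤ n, coeff j (y ^ k) = coeff j (y' ^ k) := by
  induction k with
  | zero => intro j _; simp
  | succ k ih =>
    intro j hj
    rw [pow_succ, pow_succ]
    exact coeff_mul_congr (fun i hi => ih i (le_trans hi hj))
      (fun i hi => h i (le_trans hi hj))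

lemma coeff_aeval {y : PowerSeries R} (hy0 : constantCoeff y = 0)
    (P : Polynomial R) (n : ℕ) :
    coeff n (Polynomial.aeval y P) =
      ∑ k ∈ Finset.range (n + 1), P.coeff k * coeff n (y ^ k) := by
  have hdeg : P.natDegree < max (n + 1) (P.natDegree + 1) :=
    lt_of_lt_of_le (Nat.lt_succ_self _) (le_max_right _ _)
  rw [Polynomial.aeval_eq_sum_range' hdeg, map_sum]
  simp_rw [LinearMap.map_smul, smul_eq_mul]
  symm
  apply Finset.sum_subset
  · exact Finset.range_subset_range.mpr (le_max_left _ _)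
  · intro k hk hk'
    have hkn : n < k := by
      simp only [Finset.mem_range] at hk hk'; omega
    rw [coeff_pow_of_lt hy0 hkn, mul_zero]

lemma coeff_aeval_congr {y : PowerSeries R} (hy0 : constantCoeff y = 0)
    {P Q : Polynomial R} {n : ℕ}
    (h : ∀ j ≤ n, P.coeff j = Q.coeff j) :
    coeff n (Polynomial.aeval y P) = coeff n (Polynomial.aeval y Q) := by
  rw [coeff_aeval hy0, coeff_aeval hy0]
  refine Finset.sum_congr rfl fun k hk => ?_
  rw [h k (by simpa [Nat.lt_succ_iff] using Finset.mem_range.mp hk)]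

lemma coeff_psComp_eq {y : PowerSeries R} (hy0 : constantCoeff y = 0)
    (f : PowerSeries R) (n : ℕ) :
    coeff n (psComp f y) = coeff n (Polynomial.aeval y (trunc (n + 1) f)) := by
  rw [coeff_aeval hy0, coeff_psComp]
  refine Finset.sum_congr rfl fun k hk => ?_
  rw [coeff_trunc, if_pos (Finset.mem_range.mp hk)]

lemma psComp_mul {y : PowerSeries R} (hy0 : constantCoeff y = 0)
    (f g : PowerSeries R) :
    psComp (f * g) y = psComp f y * psComp g y := by
  ext n
  have h1 : coeff n (psComp (f * g) y)
      = coeff n (Polynomial.aeval y (trunc (n + 1) f * trunc (n + 1) g)) := by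
    rw [coeff_psComp_eq hy0]
    apply coeff_aeval_congr hy0
    intro j hj
    rw [coeff_trunc, if_pos (by omega), PowerSeries.coeff_mul, Polynomial.coeff_mul]
    refine Finset.sum_congr rfl fun p hp => ?_
    have hpn := Finset.HasAntidiagonal.mem_antidiagonal.mp hp
    rw [coeff_trunc, coeff_trunc, if_pos (by omega), if_pos (by omega)]
  rw [h1, map_mul, PowerSeries.coeff_mul, PowerSeries.coeff_mul]
  refine Finset.sum_congr rfl fun p hp => ?_
  have hpn := Finset.HasAntidiagonal.mem_antidiagonal.mp hp
  have e1 : coeff p.1 (psComp f y)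
      = coeff p.1 (Polynomial.aeval y (trunc (n + 1) f)) := by
    rw [coeff_psComp_eq hy0]
    apply coeff_aeval_congr hy0
    intro j hj
    rw [coeff_trunc, coeff_trunc, if_pos (by omega), if_pos (by omega)]
  have e2 : coeff p.2 (psComp g y)
      = coeff p.2 (Polynomial.aeval y (trunc (n + 1) g)) := by
    rw [coeff_psComp_eq hy0]
    apply coeff_aeval_congr hy0
    intro j hj
    rw [coeff_trunc, coeff_trunc, if_pos (by omega), if_pos (by omega)]
  rw [e1, e2]

lemma psComp_one (y : PowerSeries R) : psComp 1 y = 1 := by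
  ext n
  rw [coeff_psComp, Finset.sum_eq_single 0]
  · simp
  · intro k _ hk0
    rw [coeff_one, if_neg hk0, zero_mul]
  · intro h
    exact absurd (Finset.mem_range.mpr (Nat.succ_pos n)) h

lemma psComp_pow {y : PowerSeries R} (hy0 : constantCoeff y = 0)
    (f : PowerSeries R) (k : ℕ) :
    psComp (f ^ k) y = (psComp f y) ^ k := by
  induction k with
  | zero => simpa using psComp_one y
  | succ k ih => rw [pow_succ, pow_succ, psComp_mul hy0, ih]

lemma psComp_eq_sum_add {y : PowerSeries R} (hy0 : constantCoeff y = 0)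
    (F : PowerSeries R) (n : ℕ) :
    ∃ h : PowerSeries R,
      psComp F y = (∑ k ∈ Finset.range n, C (coeff k F) * y ^ k) + X ^ n * h := by
  have hdvd : (X : PowerSeries R) ^ n ∣
      psComp F y - ∑ k ∈ Finset.range n, C (coeff k F) * y ^ k := by
    rw [X_pow_dvd_iff]
    intro j hj
    rw [map_sub, coeff_psComp, map_sum]
    simp_rw [coeff_C_mul]
    rw [sub_eq_zero]
    apply Finset.sum_subset
    · exact Finset.range_subset_range.mpr (by omega)
    · intro k hk hk'
      have hkj : j < k := by
        simp only [Finset.mem_range] at hk hk'; omega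
      rw [coeff_pow_of_lt hy0 hkj, mul_zero]
  obtain ⟨h, hh⟩ := hdvd
  exact ⟨h, by rw [← hh]; ring⟩

lemma constantCoeff_psComp (f y : PowerSeries R) :
    constantCoeff (psComp f y) = constantCoeff f := by
  have := coeff_psComp f y 0
  simp only [Finset.range_one, Finset.sum_singleton, pow_zero, coeff_zero_eq_constantCoeff,
    map_one, mul_one] at this
  simpa [coeff_zero_eq_constantCoeff] using this

lemma psComp_map {R' : Type*} [CommRing R'] (e : R →+* R') (f y : PowerSeries R) :
    PowerSeries.map e (psComp f y) = psComp (PowerSeries.map e f) (PowerSeries.map e y) := by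
  ext n
  rw [coeff_map, coeff_psComp, coeff_psComp, map_sum]
  refine Finset.sum_congr rfl fun k _ => ?_
  rw [map_mul, ← map_pow, coeff_map, coeff_map]

lemma psComp_fixed_unique (φ y1 y2 : PowerSeries R)
    (h1 : y1 = X * psComp φ y1) (h2 : y2 = X * psComp φ y2) : y1 = y2 := by
  have key : ∀ n, coeff n y1 = coeff n y2 := by
    intro n
    induction n using Nat.strong_induction_on with
    | _ n ih =>
      match n with
      | 0 =>
        conv_lhs => rw [h1]
        conv_rhs => rw [h2]
        simp [coeff_zero_eq_constantCoeff]
      | n + 1 =>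
        conv_lhs => rw [h1]
        conv_rhs => rw [h2]
        rw [coeff_succ_X_mul, coeff_succ_X_mul, coeff_psComp, coeff_psComp]
        refine Finset.sum_congr rfl fun k _ => ?_
        rw [coeff_pow_congr (fun j hj => ih j (Nat.lt_succ_of_le hj)) k n le_rfl]
  ext n
  exact key n

noncomputable def solCoeff (φ : PowerSeries R) : ℕ → R
  | 0 => 0
  | n + 1 =>
    ∑ k ∈ Finset.range (n + 1),
      coeff k φ *
        coeff n ((PowerSeries.mk fun j => if h : j ≤ n then solCoeff φ j else 0) ^ k)
decreasing_by exact Nat.lt_succ_of_le h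

noncomputable def ysol (φ : PowerSeries R) : PowerSeries R :=
  PowerSeries.mk (solCoeff φ)

lemma ysol_eq (φ : PowerSeries R) : ysol φ = X * psComp φ (ysol φ) := by
  ext n
  match n with
  | 0 =>
    simp [ysol, solCoeff, coeff_zero_eq_constantCoeff]
  | n + 1 =>
    rw [coeff_succ_X_mul, coeff_psComp]
    have hL : coeff (n+1) (ysol φ) = solCoeff φ (n+1) := coeff_mk _ _
    rw [hL, solCoeff]
    refine Finset.sum_congr rfl fun k _ => ?_
    congr 1
    refine coeff_pow_congr ?_ k n le_rfl
    intro j hj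
    simp [ysol, coeff_mk, hj]

end Aux

section Core

lemma lagrange_core {K : Type*} [Field K] [CharZero K]
    (φ y : PowerSeries K)
    (hφ : constantCoeff φ ≠ 0)
    (hy0 : constantCoeff y = 0)
    (hy : y = X * psComp φ y)
    (n : ℕ) (hn : 1 ≤ n) :
    (n : K) * coeff n y = coeff (n - 1) (φ ^ n) := by
  set u : PowerSeries K := psComp φ y with hu
  have hu0 : constantCoeff u = constantCoeff φ := constantCoeff_psComp φ y
  have hu0' : constantCoeff u ≠ 0 := by rw [hu0]; exact hφ
  set v : PowerSeries K := u⁻¹ with hv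
  have huv : u * v = 1 := PowerSeries.mul_inv_cancel u hu0'
  set dy : PowerSeries K := derivative K y with hdy
  have hy' : dy = u + X * (derivative K u) := by
    rw [hdy]
    conv_lhs => rw [hy]
    rw [Derivation.leibniz, derivative_X]
    simp only [smul_eq_mul, mul_one]
    ring
  -- key claim
  have key : ∀ m : ℕ, 1 ≤ m →
      coeff (m - 1) (v ^ m * dy) = if m = 1 then 1 else 0 := by
    intro m hm
    rcases eq_or_lt_of_le hm with h1 | h2
    · -- m = 1
      rw [← h1]
      rw [if_pos rfl, pow_one]
      have hc : coeff 0 (v * dy) = constantCoeff v * constantCoeff dy := by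
        simp [coeff_zero_eq_constantCoeff, map_mul]
      have hdy0 : constantCoeff dy = constantCoeff φ := by
        rw [hy']
        simp [hu0]
      have hv0 : constantCoeff v = (constantCoeff u)⁻¹ :=
        PowerSeries.constantCoeff_inv u
      rw [show (1 : ℕ) - 1 = 0 from rfl, hc, hdy0, hv0, hu0]
      exact inv_mul_cancel₀ hφ
    · -- m ≥ 2
      have hm2 : 2 ≤ m := h2
      rw [if_neg (by omega)]
      have hvmu : v ^ m * u = v ^ (m - 1) := by
        have hvm : v ^ m = v ^ (m - 1) * v := by
          rw [← pow_succ]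
          congr 1
          omega
        rw [hvm, mul_assoc, mul_comm v u, huv, mul_one]
      have hid : v ^ m * dy = v ^ (m - 1) + X * (v ^ m * derivative K u) := by
        rw [hy', mul_add, hvmu]
        ring
      have hdv : derivative K v = -(v ^ 2) * derivative K u := by
        rw [hv]
        exact derivative_inv' u
      have hvv : v ^ (m - 2) * v ^ 2 = v ^ m := by
        rw [← pow_add]
        congr 1
        omega
      have hc : ((m - 1 : ℕ) : PowerSeries K) = C ((m - 1 : ℕ) : K) :=
        (map_natCast (C (R := K)) (m - 1)).symm
      have hpow : derivative K (v ^ (m - 1)) =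
          -(C ((m - 1 : ℕ) : K) * (v ^ m * derivative K u)) := by
        rw [Derivation.leibniz_pow, hdv]
        simp only [nsmul_eq_mul, smul_eq_mul]
        rw [show m - 1 - 1 = m - 2 by omega, ← hc, ← hvv]
        ring
      have hne : ((m - 1 : ℕ) : K) ≠ 0 := Nat.cast_ne_zero.mpr (by omega)
      have e1 : coeff (m - 2) (derivative K (v ^ (m - 1))) =
          coeff (m - 1) (v ^ (m - 1)) * ((m - 1 : ℕ) : K) := by
        have := coeff_derivative (v ^ (m - 1)) (m - 2)
        rw [show m - 2 + 1 = m - 1 by omega] at this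
        rw [this]
        congr 1
        have hmm : m - 2 + 1 = m - 1 := by omega
        exact_mod_cast congrArg (Nat.cast : ℕ → K) hmm
      have e2 : coeff (m - 2) (derivative K (v ^ (m - 1))) =
          -(((m - 1 : ℕ) : K) * coeff (m - 2) (v ^ m * derivative K u)) := by
        rw [hpow, map_neg, coeff_C_mul]
      have hb : coeff (m - 2) (v ^ m * derivative K u) =
          -coeff (m - 1) (v ^ (m - 1)) := by
        have h3 : ((m - 1 : ℕ) : K) * coeff (m - 2) (v ^ m * derivative K u)
            = ((m - 1 : ℕ) : K) * (-coeff (m - 1) (v ^ (m - 1))) := by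
          have h5 := e1.symm.trans e2
          linear_combination h5
        exact mul_left_cancel₀ hne h3
      have hstep : coeff (m - 1) (X * (v ^ m * derivative K u)) =
          coeff (m - 2) (v ^ m * derivative K u) := by
        rw [show m - 1 = (m - 2) + 1 by omega, coeff_succ_X_mul]
      rw [hid, map_add, hstep, hb]
      ring
  -- main computation
  obtain ⟨h, hdec⟩ := psComp_eq_sum_add hy0 (φ ^ n) n
  rw [psComp_pow hy0, ← hu] at hdec
  have hone : u ^ n * v ^ n = 1 := by rw [← mul_pow, huv, one_pow]
  have hmain : dy = (∑ k ∈ Finset.range n, C (coeff k (φ ^ n)) * y ^ k) * (v ^ n * dy)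
      + X ^ n * (h * (v ^ n * dy)) := by
    calc dy = (u ^ n * v ^ n) * dy := by rw [hone, one_mul]
    _ = _ := by rw [hdec]; ring
  have hL : coeff (n - 1) dy = (n : K) * coeff n y := by
    rw [hdy]
    have := coeff_derivative y (n - 1)
    rw [show n - 1 + 1 = n by omega] at this
    rw [this, mul_comm]
    congr 1
    have : ((n - 1 : ℕ) : K) = (n : K) - 1 := by
      push_cast [Nat.cast_sub hn]
      ring
    rw [this]
    ring
  have hX : coeff (n - 1) (X ^ n * (h * (v ^ n * dy))) = 0 :=
    X_pow_dvd_iff.mp ⟨_, rfl⟩ (n - 1) (by omega)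
  have hT : coeff (n - 1)
      ((∑ k ∈ Finset.range n, C (coeff k (φ ^ n)) * y ^ k) * (v ^ n * dy))
      = coeff (n - 1) (φ ^ n) := by
    rw [Finset.sum_mul, map_sum]
    have hterm : ∀ k ∈ Finset.range n,
        coeff (n - 1) (C (coeff k (φ ^ n)) * y ^ k * (v ^ n * dy))
        = if k = n - 1 then coeff (n - 1) (φ ^ n) else 0 := by
      intro k hk
      have hkn : k < n := Finset.mem_range.mp hk
      rw [mul_assoc, coeff_C_mul]
      have h1 : y ^ k = X ^ k * u ^ k := by rw [hy, mul_pow]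
      have h2 : u ^ k * v ^ n = v ^ (n - k) := by
        have hvn : v ^ n = v ^ k * v ^ (n - k) := by
          rw [← pow_add]
          congr 1
          omega
        rw [hvn, ← mul_assoc, ← mul_pow, huv, one_pow, one_mul]
      have hyk : y ^ k * (v ^ n * dy) = X ^ k * (v ^ (n - k) * dy) := by
        calc y ^ k * (v ^ n * dy) = X ^ k * (u ^ k * v ^ n * dy) := by rw [h1]; ring
        _ = X ^ k * (v ^ (n - k) * dy) := by rw [h2]
      have h3 : coeff (n - 1) (X ^ k * (v ^ (n - k) * dy))
          = coeff (n - 1 - k) (v ^ (n - k) * dy) := by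
        rw [coeff_X_pow_mul', if_pos (by omega)]
      rw [hyk, h3, show n - 1 - k = n - k - 1 by omega, key (n - k) (by omega)]
      by_cases hk1 : k = n - 1
      · rw [if_pos (by omega), if_pos hk1, mul_one, hk1]
      · rw [if_neg (by omega), if_neg hk1, mul_zero]
    rw [Finset.sum_congr rfl hterm, Finset.sum_ite_eq' (Finset.range n) (n - 1)]
    rw [if_pos (Finset.mem_range.mpr (by omega))]
  rw [← hL, hmain, map_add, hT, hX, add_zero]

end Core

/-- Lagrange inversion: if `φ` has nonzero constant term and `y(z)`, with
`y(0) = 0`, satisfies `y = z * φ(y)`, then `n * [z^n] y = [y^(n-1)] φ^n`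
for all `n ≥ 1`. -/
theorem lagrange_inversion {R : Type*} [CommRing R] [Algebra ℚ R]
    (φ y : PowerSeries R)
    (hφ : PowerSeries.constantCoeff φ ≠ 0)
    (hy0 : PowerSeries.constantCoeff y = 0)
    (hy : y = PowerSeries.X * psComp φ y)
    (n : ℕ) (hn : 1 ≤ n) :
    (n : R) * PowerSeries.coeff n y = PowerSeries.coeff (n - 1) (φ ^ n) := by
  classical
  set Sr := MvPolynomial ℕ ℚ with hSr
  set Φ : PowerSeries Sr := PowerSeries.mk fun i => MvPolynomial.X i with hΦ
  set Y : PowerSeries Sr := ysol Φ with hY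
  have hYeq : Y = X * psComp Φ Y := ysol_eq Φ
  set K := FractionRing Sr with hK
  set ι : Sr →+* K := algebraMap Sr K with hι
  have hinj : Function.Injective ι := IsFractionRing.injective Sr K
  haveI : CharZero K := charZero_of_injective_algebraMap hinj
  have hΦ0 : constantCoeff Φ = MvPolynomial.X 0 := by
    rw [hΦ, ← coeff_zero_eq_constantCoeff_apply, coeff_mk]
  have hΦK : constantCoeff (PowerSeries.map ι Φ) ≠ 0 := by
    rw [← coeff_zero_eq_constantCoeff_apply, coeff_map, coeff_zero_eq_constantCoeff_apply, hΦ0]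
    intro hzero
    have := hinj (hzero.trans (map_zero ι).symm)
    exact MvPolynomial.X_ne_zero 0 this
  have hYK : PowerSeries.map ι Y = X * psComp (PowerSeries.map ι Φ) (PowerSeries.map ι Y) := by
    conv_lhs => rw [hYeq]
    rw [map_mul, PowerSeries.map_X, psComp_map]
  have hY0K : constantCoeff (PowerSeries.map ι Y) = 0 := by
    rw [← coeff_zero_eq_constantCoeff_apply, coeff_map]
    have h6 : coeff 0 Y = 0 := by
      rw [hY, ysol, coeff_mk, solCoeff]
    rw [h6, map_zero]
  have hCore := lagrange_core (PowerSeries.map ι Φ) (PowerSeries.map ι Y) hΦK hY0K hYK n hn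
  have hS : (n : Sr) * coeff n Y = coeff (n - 1) (Φ ^ n) := by
    apply hinj
    rw [map_mul, map_natCast, ← coeff_map, ← coeff_map, map_pow]
    exact hCore
  set e : Sr →+* R :=
    (MvPolynomial.aeval fun i => PowerSeries.coeff i φ : Sr →ₐ[ℚ] R).toRingHom with he
  have hΦR : PowerSeries.map e Φ = φ := by
    ext i
    rw [coeff_map, hΦ, coeff_mk, he]
    show (MvPolynomial.aeval fun i => (PowerSeries.coeff i) φ) (MvPolynomial.X i)
      = (PowerSeries.coeff i) φ
    rw [MvPolynomial.aeval_X]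
  have hyR : y = PowerSeries.map e Y := by
    apply psComp_fixed_unique φ _ _ hy
    have h4 : PowerSeries.map e Y
        = X * psComp (PowerSeries.map e Φ) (PowerSeries.map e Y) := by
      conv_lhs => rw [hYeq]
      rw [map_mul, PowerSeries.map_X, psComp_map]
    rwa [hΦR] at h4
  rw [hyR, ← hΦR, coeff_map, ← map_pow, coeff_map, ← map_natCast e (n : ℕ), ← map_mul]
  exact congrArg e hS
end

section
/- Every matrix A in SL(2,ℤ) can be written as a product of matrices of the form M(c) = [[c, -1],[1, 0]] with positive integer entries c: there exist N ≥ 1 and positive integers c_1, ..., c_N such that A = M(c_1)·M(c_2)·...·M(c_N). -/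
/-- The elementary matrix `M(c) = [[c, -1], [1, 0]]`. -/
def Mmat (c : ℤ) : Matrix (Fin 2) (Fin 2) ℤ := !![c, -1; 1, 0]

namespace Sl2Aux

/-- `A` is a nonempty product of `Mmat c` with all `c` positive. -/
def PosWord (A : Matrix (Fin 2) (Fin 2) ℤ) : Prop :=
  ∃ l : List ℤ, l ≠ [] ∧ (∀ x ∈ l, 0 < x) ∧ A = (l.map Mmat).prod

lemma posWord_mul {A B} (hA : PosWord A) (hB : PosWord B) : PosWord (A * B) := by
  obtain ⟨l, hl, hlp, rfl⟩ := hA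
  obtain ⟨m, hm, hmp, rfl⟩ := hB
  refine ⟨l ++ m, by simp [hl], ?_, by simp⟩
  intro x hx
  rcases List.mem_append.mp hx with h | h
  · exact hlp x h
  · exact hmp x h

lemma posWord_of_eq {A B} (h : PosWord A) (e : A = B) : PosWord B := e ▸ h

/-- S = [[0,-1],[1,0]] -/
lemma posWord_S : PosWord !![(0 : ℤ), -1; 1, 0] := by
  refine ⟨[1, 1, 1, 1, 1, 2, 1, 1], by simp, by decide, ?_⟩
  simp only [List.map, List.prod_cons, List.prod_nil, Mmat, mul_one]
  norm_num [Matrix.mul_fin_two]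

/-- T = [[1,1],[0,1]] -/
lemma posWord_T : PosWord !![(1 : ℤ), 1; 0, 1] := by
  refine ⟨[1, 1, 1, 2, 1, 1], by simp, by decide, ?_⟩
  simp only [List.map, List.prod_cons, List.prod_nil, Mmat, mul_one]
  norm_num [Matrix.mul_fin_two]

/-- T⁻¹ = [[1,-1],[0,1]] -/
lemma posWord_Tinv : PosWord !![(1 : ℤ), -1; 0, 1] := by
  refine ⟨[1, 1, 1, 1, 1, 2, 1], by simp, by decide, ?_⟩
  simp only [List.map, List.prod_cons, List.prod_nil, Mmat, mul_one]
  norm_num [Matrix.mul_fin_two]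

/-- identity -/
lemma posWord_one : PosWord (1 : Matrix (Fin 2) (Fin 2) ℤ) := by
  refine ⟨[1, 1, 1, 1, 1, 1], by simp, by decide, ?_⟩
  rw [Matrix.one_fin_two]
  simp only [List.map, List.prod_cons, List.prod_nil, Mmat, mul_one]
  norm_num [Matrix.mul_fin_two]

/-- -identity -/
lemma posWord_negOne : PosWord (-1 : Matrix (Fin 2) (Fin 2) ℤ) := by
  refine ⟨[1, 1, 1], by simp, by decide, ?_⟩
  simp only [List.map, List.prod_cons, List.prod_nil, Mmat, mul_one]
  ext i j
  fin_cases i <;> fin_cases j <;>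
    simp [Matrix.mul_apply, Fin.sum_univ_two]

lemma posWord_neg {A} (h : PosWord A) : PosWord (-A) := by
  have := posWord_mul posWord_negOne h
  simpa using this

/-- T^b for any integer b -/
lemma posWord_Tpow (b : ℤ) : PosWord !![(1 : ℤ), b; 0, 1] := by
  induction b using Int.induction_on with
  | zero => exact posWord_of_eq posWord_one (by rw [Matrix.one_fin_two])
  | succ k ih =>
      refine posWord_of_eq (posWord_mul ih posWord_T) ?_
      ext i j
      fin_cases i <;> fin_cases j <;>
        simp [Matrix.mul_apply, Fin.sum_univ_two] <;> try ring
  | pred k ih =>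
      refine posWord_of_eq (posWord_mul ih posWord_Tinv) ?_
      ext i j
      fin_cases i <;> fin_cases j <;>
        simp [Matrix.mul_apply, Fin.sum_univ_two] <;> ring

/-- M(q) for any integer q -/
lemma posWord_Mmat_any (q : ℤ) : PosWord (Mmat q) := by
  refine posWord_of_eq (posWord_mul (posWord_Tpow q) posWord_S) ?_
  ext i j
  fin_cases i <;> fin_cases j <;>
    simp [Mmat, Matrix.mul_apply, Fin.sum_univ_two]

/-- The upper-triangular case. -/
lemma posWord_of_lower_left_zero (A : Matrix (Fin 2) (Fin 2) ℤ) (hdet : A.det = 1)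
    (hc : A 1 0 = 0) : PosWord A := by
  have hdet' : A 0 0 * A 1 1 = 1 := by
    have := Matrix.det_fin_two A
    rw [hdet, hc] at this
    linarith
  rcases Int.eq_one_or_neg_one_of_mul_eq_one' hdet' with ⟨h1, h2⟩ | ⟨h1, h2⟩
  · refine posWord_of_eq (posWord_Tpow (A 0 1)) ?_
    ext i j
    fin_cases i <;> fin_cases j <;> simp [hc, h1, h2]
  · refine posWord_of_eq (posWord_neg (posWord_Tpow (-(A 0 1)))) ?_
    ext i j
    fin_cases i <;> fin_cases j <;> simp [hc, h1, h2]

lemma main : ∀ n : ℕ, ∀ A : Matrix (Fin 2) (Fin 2) ℤ, A.det = 1 →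
    (A 1 0).natAbs ≤ n → PosWord A := by
  intro n
  induction n with
  | zero =>
      intro A hdet hle
      exact posWord_of_lower_left_zero A hdet (by omega)
  | succ m ih =>
      intro A hdet hle
      by_cases hc : A 1 0 = 0
      · exact posWord_of_lower_left_zero A hdet hc
      · set a := A 0 0 with ha
        set b := A 0 1 with hb
        set c := A 1 0 with hcc
        set d := A 1 1 with hd
        set q : ℤ := a / c with hq
        set r : ℤ := a % c with hr
        have hrc : c * q + r = a := Int.mul_ediv_add_emod a c
        have hr0 : 0 ≤ r := Int.emod_nonneg a hc
        have hrlt : r < |c| := Int.emod_lt_abs a hc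
        have hadbc : a * d - b * c = 1 := by
          have hdA := Matrix.det_fin_two A
          rw [hdet] at hdA
          rw [← ha, ← hb, ← hcc, ← hd] at hdA
          linarith
        set B : Matrix (Fin 2) (Fin 2) ℤ := !![c, d; -r, q * d - b] with hB
        have hdetB : B.det = 1 := by
          rw [hB, Matrix.det_fin_two_of]
          linear_combination d * hrc + hadbc
        have hBle : (B 1 0).natAbs ≤ m := by
          have h1 : (B 1 0) = -r := by rw [hB]; simp
          rw [h1]
          rw [Int.abs_eq_natAbs] at hrlt
          omega
        have hPB := ih B hdetB hBle
        refine posWord_of_eq (posWord_mul (posWord_Mmat_any q) hPB) ?_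
        ext i j
        fin_cases i <;> fin_cases j <;>
          simp [hB, Mmat, Matrix.mul_apply, Fin.sum_univ_two, ← ha, ← hb, ← hcc, ← hd] <;>
          linarith [hrc]

end Sl2Aux

/-- Every `A ∈ SL(2, ℤ)` is a product `M(c₁) * M(c₂) * ... * M(c_N)` of
elementary matrices `M(c) = [[c, -1], [1, 0]]` with positive integers `cᵢ`. -/
theorem sl2_prod_elementary (A : Matrix.SpecialLinearGroup (Fin 2) ℤ) :
    ∃ (N : ℕ) (c : Fin N → ℤ), 1 ≤ N ∧ (∀ i, 0 < c i) ∧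
      (A : Matrix (Fin 2) (Fin 2) ℤ) = (List.ofFn fun i => Mmat (c i)).prod := by
  obtain ⟨l, hl, hlp, hEq⟩ := Sl2Aux.main (A.1 1 0).natAbs A.1 A.2 le_rfl
  refine ⟨l.length, fun i => l.get i, ?_, fun i => hlp _ (List.get_mem l i), ?_⟩
  · exact Nat.one_le_iff_ne_zero.mpr (by simpa using hl)
  · rw [hEq]
    congr 1
    conv_lhs => rw [← List.ofFn_get l]
    rw [List.map_ofFn]
    rfl
end
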